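/- arXiv:2301.02951 — 17 statements merged into one kernel-verified Lean document; each statement's English description precedes it below -/
import Mathlib

section
/- Let p = 4n-1 be prime and m a nonnegative integer. Then there is no integer k such that k^2 - 3k + 4 - 3n = m·p. -/
theorem no_integer_root_shifted (n p m : ℤ) (hn : 1 ≤ n) (hp : p = 4 * n - 1)
    (hprime : Prime p) (hm : 0 ≤ m) :
    ¬ ∃ k : ℤ, k ^ 2 - 3 * k + 4 - 3 * n = m * p := by
  rintro ⟨k, hk⟩
  have hp3 : (3 : ℤ) ≤ p := by omega
  set q := p.natAbs with hq
  have hqp : (q : ℤ) = p := Int.natAbs_of_nonneg (by omega)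
  have hqprime : q.Prime := Int.prime_iff_natAbs_prime.mp hprime
  haveI : Fact q.Prime := ⟨hqprime⟩
  have hq4 : q % 4 = 3 := by omega
  -- key: (2k-3)^2 + 4 = (4m+3) * p
  have key : (2 * k - 3) ^ 2 + 4 = (4 * m + 3) * p := by ring_nf; ring_nf at hk; linarith
  -- in ZMod q
  have hz : ((2 * k - 3 : ℤ) : ZMod q) ^ 2 = -4 := by
    have : ((2 * k - 3 : ℤ) : ZMod q) ^ 2 + 4 = ((4 * m + 3 : ℤ) : ZMod q) * (p : ZMod q) := by
      have h := congrArg (fun x : ℤ => (x : ZMod q)) key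
      push_cast at h ⊢
      linear_combination h
    have hp0 : ((p : ℤ) : ZMod q) = 0 := by
      rw [← hqp]; exact_mod_cast ZMod.natCast_self q
    rw [hp0, mul_zero] at this
    linear_combination this
  have h2 : (2 : ZMod q) ≠ 0 := by
    have : ((2 : ℕ) : ZMod q) ≠ 0 := by
      rw [Ne, ZMod.natCast_eq_zero_iff]
      intro h
      have := Nat.le_of_dvd (by norm_num) h
      omega
    simpa using this
  have hsq : IsSquare (-1 : ZMod q) := by
    refine ⟨((2 * k - 3 : ℤ) : ZMod q) * 2⁻¹, ?_⟩
    have h4 : (2 : ZMod q) * 2⁻¹ = 1 := mul_inv_cancel₀ h2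
    have : (((2 * k - 3 : ℤ) : ZMod q) * 2⁻¹) * (((2 * k - 3 : ℤ) : ZMod q) * 2⁻¹)
        = -4 * (2⁻¹ * 2⁻¹) := by rw [← hz]; ring
    rw [this]
    have : (-4 : ZMod q) * (2⁻¹ * 2⁻¹) = -((2 * 2⁻¹) * (2 * 2⁻¹)) := by ring
    rw [this, h4]; ring
  rw [ZMod.exists_sq_eq_neg_one_iff] at hsq
  exact hsq hq4
end

section
/- Let p = 4n-1 be prime with n ≥ 3, and let m be an integer with 0 ≤ m ≤ ⌊(n^2 - 4n + 5)/p⌋. Define k_m = 1 + ⌊(1 + sqrt(4mp + 12n - 7))/2⌋. Then 3 ≤ k_m ≤ n+2. -/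
theorem km_bounds (n p m k : ℤ) (hn : 3 ≤ n) (hp : p = 4 * n - 1)
    (hprime : Prime p) (hm0 : 0 ≤ m) (hmM : m ≤ (n ^ 2 - 4 * n + 5) / p)
    (hk : k = 1 + ⌊(1 + Real.sqrt ((4 * m * p + 12 * n - 7 : ℤ) : ℝ)) / 2⌋) :
    3 ≤ k ∧ k ≤ n + 2 := by
  have hp0 : (0:ℤ) < p := by omega
  have hmp0 : 0 ≤ m * p := mul_nonneg hm0 hp0.le
  set X : ℤ := 4 * m * p + 12 * n - 7 with hXdef
  have hX9 : (9:ℤ) ≤ X := by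
    have : 0 ≤ 4 * m * p := by linarith [mul_nonneg hm0 hp0.le]; 
    linarith
  have hmp : m * p ≤ n ^ 2 - 4 * n + 5 := by
    have h1 : m * p ≤ ((n ^ 2 - 4 * n + 5) / p) * p :=
      mul_le_mul_of_nonneg_right hmM hp0.le
    have h2 : ((n ^ 2 - 4 * n + 5) / p) * p ≤ n ^ 2 - 4 * n + 5 :=
      Int.ediv_mul_le _ (by omega)
    linarith
  have hXub : X < (2 * n + 3) ^ 2 := by nlinarith
  have hXr : (0:ℝ) ≤ ((X : ℤ) : ℝ) := by exact_mod_cast le_trans (by norm_num) hX9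
  have hsq : (3:ℝ) ≤ Real.sqrt ((X:ℤ):ℝ) := by
    rw [show (3:ℝ) = Real.sqrt 9 by
      rw [show (9:ℝ) = 3 ^ 2 by norm_num, Real.sqrt_sq]; norm_num]
    exact Real.sqrt_le_sqrt (by exact_mod_cast hX9)
  have hlb : (2:ℤ) ≤ ⌊(1 + Real.sqrt ((X:ℤ):ℝ)) / 2⌋ := by
    rw [Int.le_floor]
    push_cast
    linarith
  have hub : Real.sqrt ((X:ℤ):ℝ) < 2 * (n:ℝ) + 3 := by
    have h2 : ((X:ℤ):ℝ) < (2 * (n:ℝ) + 3) ^ 2 := by exact_mod_cast hXub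
    have hpos : (0:ℝ) < 2 * (n:ℝ) + 3 := by
      have : (3:ℝ) ≤ (n:ℝ) := by exact_mod_cast hn
      linarith
    nlinarith [Real.sq_sqrt hXr, Real.sqrt_nonneg ((X:ℤ):ℝ)]
  have hub' : ⌊(1 + Real.sqrt ((X:ℤ):ℝ)) / 2⌋ < n + 2 := by
    rw [Int.floor_lt]
    push_cast
    linarith
  omega
end

section
/- Let p = 4n-1 be prime with n ≥ 3, let 0 ≤ m ≤ ⌊(n^2-4n+5)/p⌋, and let k_m = 1 + ⌊(1 + sqrt(4mp + 12n - 7))/2⌋. Then the residue of (k_m - 1)^2 modulo p equals (k_m - 1)^2 - m·p, and it satisfies 3n - k_m - 1 < (k_m - 1)^2 - m·p ≤ 3n + k_m - 4. -/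
theorem km_residue_bounds (n p m k : ℤ) (hn : 3 ≤ n) (hp : p = 4 * n - 1)
    (hprime : Prime p) (hm0 : 0 ≤ m) (hmM : m ≤ (n ^ 2 - 4 * n + 5) / p)
    (hk : k = 1 + ⌊(1 + Real.sqrt ((4 * m * p + 12 * n - 7 : ℤ) : ℝ)) / 2⌋) :
    (k - 1) ^ 2 % p = (k - 1) ^ 2 - m * p ∧
      3 * n - k - 1 < (k - 1) ^ 2 - m * p ∧ (k - 1) ^ 2 - m * p ≤ 3 * n + k - 4 := by
  have hppos : 0 < p := by omega
  set D : ℤ := 4 * m * p + 12 * n - 7 with hD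
  have hD' : D = 4 * (m * p) + 12 * n - 7 := by rw [hD]; ring
  have hmp0 : 0 ≤ m * p := mul_nonneg hm0 hppos.le
  have hD29 : 29 ≤ D := by omega
  set j : ℤ := ⌊(1 + Real.sqrt ((D : ℤ) : ℝ)) / 2⌋ with hj
  have hkj : k = j + 1 := by omega
  have hDR0 : (0 : ℝ) ≤ (D : ℝ) := by
    have : (0 : ℤ) ≤ D := by omega
    exact_mod_cast this
  -- j ≥ 3
  have h5 : (5 : ℝ) ≤ Real.sqrt (D : ℝ) := by
    rw [Real.le_sqrt' (by norm_num)]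
    have : (29 : ℝ) ≤ (D : ℝ) := by exact_mod_cast hD29
    nlinarith
  have hj3 : 3 ≤ j := by
    rw [hj]
    have h3 : (3 : ℝ) ≤ (1 + Real.sqrt (D : ℝ)) / 2 := by linarith
    exact_mod_cast Int.le_floor.2 (by exact_mod_cast h3)
  have hfl := Int.floor_le ((1 + Real.sqrt ((D : ℤ) : ℝ)) / 2)
  have hfu := Int.lt_floor_add_one ((1 + Real.sqrt ((D : ℤ) : ℝ)) / 2)
  rw [← hj] at hfl hfu
  -- (2j-1)^2 ≤ D < (2j+1)^2
  have hjR : (1 : ℝ) ≤ (j : ℝ) := by exact_mod_cast (by omega : (1:ℤ) ≤ j)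
  have hlow : (2 * j - 1) ^ 2 ≤ D := by
    have h1 : ((2 * j - 1 : ℤ) : ℝ) ≤ Real.sqrt (D : ℝ) := by push_cast; linarith
    have h2 : ((2 * j - 1 : ℤ) : ℝ) ^ 2 ≤ (D : ℝ) := by
      rw [← Real.le_sqrt' (by push_cast; linarith)]
      exact h1
    exact_mod_cast h2
  have hup : D < (2 * j + 1) ^ 2 := by
    have h1 : Real.sqrt (D : ℝ) < ((2 * j + 1 : ℤ) : ℝ) := by push_cast; linarith
    have h2 : (D : ℝ) < ((2 * j + 1 : ℤ) : ℝ) ^ 2 := by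
      rw [← Real.sqrt_lt' (by push_cast; linarith)]
      exact h1
    exact_mod_cast h2
  -- D is not a perfect square (would make -1 a square mod p, impossible as p ≡ 3 mod 4)
  have hne : D ≠ (2 * j - 1) ^ 2 := by
    intro heq
    set P : ℕ := p.toNat with hPdef
    have hPp : (P : ℤ) = p := Int.toNat_of_nonneg hppos.le
    have hPprime : P.Prime := by
      rw [Int.prime_iff_natAbs_prime] at hprime
      rwa [show p.natAbs = P by omega] at hprime
    haveI : Fact P.Prime := ⟨hPprime⟩
    have hP11 : 11 ≤ P := by omega
    have hp0 : ((p : ℤ) : ZMod P) = 0 := by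
      rw [ZMod.intCast_zmod_eq_zero_iff_dvd, hPp]
    have hDp : ((D : ℤ) : ZMod P) = -4 := by
      have hfac : D = (4 * m + 3) * p - 4 := by rw [hD, hp]; ring
      rw [hfac]
      push_cast
      rw [hp0]
      ring
    have hsq : ((2 * j - 1 : ℤ) : ZMod P) ^ 2 = -4 := by
      calc ((2 * j - 1 : ℤ) : ZMod P) ^ 2 = (((2 * j - 1) ^ 2 : ℤ) : ZMod P) := by
            push_cast; ring
        _ = ((D : ℤ) : ZMod P) := by rw [heq]
        _ = -4 := hDp
    have h2ne : (2 : ZMod P) ≠ 0 := by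
      intro h
      have h2 : ((2 : ℕ) : ZMod P) = 0 := by exact_mod_cast h
      rw [ZMod.natCast_eq_zero_iff] at h2
      have := Nat.le_of_dvd (by norm_num) h2
      omega
    have hsqm1 : IsSquare (-1 : ZMod P) := by
      refine ⟨((2 * j - 1 : ℤ) : ZMod P) * 2⁻¹, ?_⟩
      have h22 : (2 : ZMod P) * 2⁻¹ = 1 := mul_inv_cancel₀ h2ne
      have hr : (((2 * j - 1 : ℤ) : ZMod P) * 2⁻¹) * (((2 * j - 1 : ℤ) : ZMod P) * 2⁻¹)
          = ((2 * j - 1 : ℤ) : ZMod P) ^ 2 * (2⁻¹ * 2⁻¹) := by ring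
      rw [hr, hsq]
      have hr2 : (-4 : ZMod P) * (2⁻¹ * 2⁻¹) = -(((2:ZMod P) * 2⁻¹) * ((2:ZMod P) * 2⁻¹)) := by
        ring
      rw [hr2, h22]; ring
    have h34 := ZMod.exists_sq_eq_neg_one_iff.mp hsqm1
    apply h34
    omega
  -- m * p ≤ n^2 - 4n + 5
  have hmpb : m * p ≤ n ^ 2 - 4 * n + 5 := by
    have := (Int.le_ediv_iff_mul_le hppos).mp hmM
    linarith
  -- j ≤ n + 1
  have hjn : j ≤ n + 1 := by
    by_contra h
    push_neg at h
    have h1 : (0:ℤ) ≤ j - n - 2 := by omega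
    have h2 : (0:ℤ) ≤ j + n + 1 := by omega
    nlinarith [mul_nonneg h1 h2]
  -- expand the squares so omega can finish
  have e1 : 4 * (j ^ 2) - 4 * j + 1 ≤ D := by nlinarith [hlow]
  have e2 : D < 4 * (j ^ 2) + 4 * j + 1 := by nlinarith [hup]
  have e3 : D ≠ 4 * (j ^ 2) - 4 * j + 1 := by
    intro h; apply hne; rw [h]; ring
  have key1 : 3 * n - j - 1 ≤ j ^ 2 - m * p := by omega
  have key2 : j ^ 2 - m * p ≤ 3 * n + j - 3 := by omega
  have hX0 : 0 ≤ j ^ 2 - m * p := by omega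
  have hXp : j ^ 2 - m * p < p := by omega
  have hq : (k - 1) ^ 2 = j ^ 2 := by rw [hkj]; ring
  have hmod : j ^ 2 % p = j ^ 2 - m * p := by
    have h1 : (j ^ 2 - m * p) % p = j ^ 2 % p := by
      rw [show j ^ 2 - m * p = j ^ 2 + p * (-m) by ring]
      simp [Int.add_mul_emod_self_left]
    rw [← h1, Int.emod_eq_of_lt hX0 hXp]
  refine ⟨?_, ?_, ?_⟩
  · rw [hq]; exact hmod
  · rw [hq]; omega
  · rw [hq]; omega
end

section
/- Let p = 4n-1 be prime with n ≥ 3, let 0 ≤ m ≤ ⌊(n^2-4n+5)/p⌋, and let k_m = 1 + ⌊(1 + sqrt(4mp + 12n - 7))/2⌋. Then k_m is a jump, i.e. r_p((k_m - 1)^2) + r_p(k_m + 1 - 3n) ≥ p. -/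
theorem km_is_jump (n p m k : ℤ) (hn : 3 ≤ n) (hp : p = 4 * n - 1)
    (hprime : Prime p) (hm0 : 0 ≤ m) (hmM : m ≤ (n ^ 2 - 4 * n + 5) / p)
    (hk : k = 1 + ⌊(1 + Real.sqrt ((4 * m * p + 12 * n - 7 : ℤ) : ℝ)) / 2⌋) :
    (k - 1) ^ 2 % p + (k + 1 - 3 * n) % p ≥ p := by
  set j : ℤ := k - 1 with hj
  have hppos : (0:ℤ) < p := by omega
  have hmp : m * p ≤ n ^ 2 - 4 * n + 5 := (Int.le_ediv_iff_mul_le hppos).mp hmM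
  set D : ℤ := 4 * m * p + 12 * n - 7 with hD
  have hD0 : (0:ℤ) ≤ D := by nlinarith [mul_nonneg hm0 hppos.le]
  have hjf : j = ⌊(1 + Real.sqrt ((D : ℤ) : ℝ)) / 2⌋ := by rw [hj, hk]; ring
  have h1 : (j : ℝ) ≤ (1 + Real.sqrt ((D : ℤ) : ℝ)) / 2 := by
    rw [hjf]; exact_mod_cast Int.floor_le _
  have h2 : (1 + Real.sqrt ((D : ℤ) : ℝ)) / 2 < (j : ℝ) + 1 := by
    rw [hjf]; exact Int.lt_floor_add_one _
  have hD0' : (0:ℝ) ≤ ((D : ℤ) : ℝ) := by exact_mod_cast hD0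
  have hs : Real.sqrt ((D : ℤ) : ℝ) ^ 2 = ((D : ℤ) : ℝ) := Real.sq_sqrt hD0'
  have hsn : 0 ≤ Real.sqrt ((D : ℤ) : ℝ) := Real.sqrt_nonneg _
  -- j ≥ 3
  have hD29 : (25:ℝ) ≤ ((D : ℤ) : ℝ) := by
    have : (25:ℤ) ≤ D := by nlinarith [mul_nonneg hm0 hppos.le]
    exact_mod_cast this
  have hs5 : (5:ℝ) ≤ Real.sqrt ((D : ℤ) : ℝ) := by
    nlinarith [hs, hsn]
  have hj3 : (3:ℤ) ≤ j := by
    rw [hjf]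
    have : (3:ℝ) ≤ (1 + Real.sqrt ((D : ℤ) : ℝ)) / 2 := by linarith
    exact_mod_cast Int.le_floor.mpr (by exact_mod_cast this)
  -- bounds on D
  have hlow : ((2 * j - 1 : ℤ) : ℝ) ^ 2 ≤ ((D : ℤ) : ℝ) := by
    have hjr : (3:ℝ) ≤ (j:ℝ) := by exact_mod_cast hj3
    push_cast
    nlinarith [h1, hs, hsn]
  have hup : ((D : ℤ) : ℝ) < ((2 * j + 1 : ℤ) : ℝ) ^ 2 := by
    push_cast
    nlinarith [h2, hs, hsn]
  have hlowZ : (2 * j - 1) ^ 2 ≤ D := by exact_mod_cast hlow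
  have hupZ : D < (2 * j + 1) ^ 2 := by exact_mod_cast hup
  have F1 : 4 * j ^ 2 - 4 * j + 1 ≤ 4 * (m * p) + 12 * n - 7 := by nlinarith [hlowZ]
  have F2 : 4 * (m * p) + 12 * n - 7 < 4 * j ^ 2 + 4 * j + 1 := by nlinarith [hupZ]
  -- j ≤ n
  have hjn : j ≤ n := by
    by_contra h
    push_neg at h
    have h1' : (0:ℤ) ≤ j - n - 1 := by omega
    have h2' : (0:ℤ) ≤ j + n := by omega
    nlinarith [mul_nonneg h1' h2']
  have hA0 : 0 ≤ j ^ 2 - m * p := by linarith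
  have hA1 : j ^ 2 - m * p < p := by linarith
  have e1 : j ^ 2 % p = j ^ 2 - m * p := by
    conv_lhs => rw [show j ^ 2 = (j ^ 2 - m * p) + p * m by ring]
    rw [Int.add_mul_emod_self_left]
    exact Int.emod_eq_of_lt hA0 hA1
  have hk2 : k + 1 - 3 * n = j + 2 - 3 * n := by omega
  have e2 : (j + 2 - 3 * n) % p = j + n + 1 := by
    rw [show j + 2 - 3 * n = (j + n + 1) + p * (-1) by rw [hp]; ring,
      Int.add_mul_emod_self_left]
    exact Int.emod_eq_of_lt (by omega) (by omega)
  rw [hk2, e1, e2]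
  linarith
end

section
/- Let p = 4n-1 be prime with n ≥ 3, let k_m = 1 + ⌊(1 + sqrt(4mp + 12n - 7))/2⌋ for 0 ≤ m ≤ ⌊(n^2-4n+5)/p⌋. If k is an integer with k ≤ n+2 and k_m < k ≤ 1 + ⌊sqrt(mp + p - 1)⌋, then k is a jump and 3n + k - 3 < r_p((k-1)^2) = (k-1)^2 - m·p. -/
theorem jumps_after_km (n p m k km : ℤ) (hn : 3 ≤ n) (hp : p = 4 * n - 1)
    (hprime : Prime p) (hm0 : 0 ≤ m) (hmM : m ≤ (n ^ 2 - 4 * n + 5) / p)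
    (hkm : km = 1 + ⌊(1 + Real.sqrt ((4 * m * p + 12 * n - 7 : ℤ) : ℝ)) / 2⌋)
    (hk1 : k ≤ n + 2) (hk2 : km < k)
    (hk3 : k ≤ 1 + ⌊Real.sqrt ((m * p + p - 1 : ℤ) : ℝ)⌋) :
    (k - 1) ^ 2 % p + (k + 1 - 3 * n) % p ≥ p ∧
      (k - 1) ^ 2 % p = (k - 1) ^ 2 - m * p ∧
      3 * n + k - 3 < (k - 1) ^ 2 - m * p := by
  have hppos : (0:ℤ) < p := by omega
  have hmp0 : (0:ℤ) ≤ m * p := mul_nonneg hm0 hppos.le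
  set x : ℝ := (1 + Real.sqrt ((4 * m * p + 12 * n - 7 : ℤ) : ℝ)) / 2 with hx
  have hs0 : 0 ≤ Real.sqrt ((4 * m * p + 12 * n - 7 : ℤ) : ℝ) := Real.sqrt_nonneg _
  have hk2' : 2 ≤ k := by
    have h0 : (0:ℤ) ≤ ⌊x⌋ := Int.floor_nonneg.2 (by positivity)
    omega
  -- From hk2 : sqrt(4mp+12n-7) < 2k-3
  have hfl : ⌊x⌋ ≤ k - 2 := by omega
  have hxlt : x < (k : ℝ) - 1 := by
    have h1 := Int.lt_floor_add_one x
    have h2 : ((⌊x⌋ : ℝ) + 1) ≤ (k : ℝ) - 1 := by exact_mod_cast by omega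
    linarith
  have hslt : Real.sqrt ((4 * m * p + 12 * n - 7 : ℤ) : ℝ) < 2 * (k : ℝ) - 3 := by
    rw [hx] at hxlt; linarith
  have hD0 : (0:ℝ) ≤ ((4 * m * p + 12 * n - 7 : ℤ) : ℝ) := by
    have : (0:ℤ) ≤ 4 * m * p + 12 * n - 7 := by nlinarith
    exact_mod_cast this
  have hDlt : ((4 * m * p + 12 * n - 7 : ℤ) : ℝ) < ((2 * k - 3 : ℤ) : ℝ) ^ 2 := by
    have hsq := Real.sq_sqrt hD0
    push_cast at hsq hslt hs0 ⊢
    nlinarith [hsq, hs0, hslt, sq_nonneg (2 * (k:ℝ) - 3 - Real.sqrt (4 * (m:ℝ) * p + 12 * n - 7))]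
  have hDltZ : (4 * m * p + 12 * n - 7 : ℤ) < (2 * k - 3) ^ 2 := by exact_mod_cast hDlt
  have key1 : m * p ≤ (k - 1) ^ 2 - k - 3 * n + 2 := by
    have h4 : m * p < (k - 1) ^ 2 - k - 3 * n + 3 := by nlinarith [hDltZ]
    omega
  -- From hk3 : (k-1)^2 ≤ m*p + p - 1
  have hE0 : (0:ℝ) ≤ ((m * p + p - 1 : ℤ) : ℝ) := by
    have : (0:ℤ) ≤ m * p + p - 1 := by omega
    exact_mod_cast this
  have hfle : ((k : ℝ) - 1) ≤ Real.sqrt ((m * p + p - 1 : ℤ) : ℝ) := by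
    have h1 : ((k - 1 : ℤ) : ℝ) ≤ (⌊Real.sqrt ((m * p + p - 1 : ℤ) : ℝ)⌋ : ℝ) := by
      exact_mod_cast by omega
    have h2 := Int.floor_le (Real.sqrt ((m * p + p - 1 : ℤ) : ℝ))
    push_cast at h1 h2 ⊢
    linarith
  have key2 : (k - 1) ^ 2 ≤ m * p + p - 1 := by
    have hk1R : (0:ℝ) ≤ (k : ℝ) - 1 := by
      have : (1:ℤ) ≤ k := by omega
      have : (1:ℝ) ≤ (k:ℝ) := by exact_mod_cast this
      linarith
    have hsq := Real.sq_sqrt hE0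
    have : ((k - 1 : ℤ) : ℝ) ^ 2 ≤ ((m * p + p - 1 : ℤ) : ℝ) := by
      push_cast at hfle hsq ⊢
      nlinarith [hfle, hk1R, hsq]
    exact_mod_cast this
  have hA0 : 0 ≤ (k - 1) ^ 2 - m * p := by nlinarith [key1]
  have hAp : (k - 1) ^ 2 - m * p < p := by linarith [key2]
  have emod1 : (k - 1) ^ 2 % p = (k - 1) ^ 2 - m * p := by
    conv_lhs => rw [show (k - 1) ^ 2 = ((k - 1) ^ 2 - m * p) + m * p by ring]
    rw [Int.add_mul_emod_self_right]
    exact Int.emod_eq_of_lt hA0 hAp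
  have emod2 : (k + 1 - 3 * n) % p = k + n := by
    rw [show k + 1 - 3 * n = (k + n) + (-1) * p by omega]
    rw [Int.add_mul_emod_self_right]
    exact Int.emod_eq_of_lt (by omega) (by omega)
  refine ⟨?_, emod1, ?_⟩
  · rw [emod1, emod2]
    nlinarith [key1]
  · nlinarith [key1]
end

section
/- Let p = 4n-1 be prime with n ≥ 2, and let 2 ≤ k ≤ n+2. If r_p((k-1)^2) < 3n - k - 1, then Γ(k) < p and Γ(p+2-k) < p. If 3n - k - 1 ≤ r_p((k-1)^2) < 3n + k - 3, then Γ(p+2-k) < p ≤ Γ(k). If 3n + k - 3 ≤ r_p((k-1)^2), then p ≤ Γ(k) and p ≤ Γ(p+2-k). -/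
theorem three_chunks_A (n p k : ℤ) (hn : 2 ≤ n) (hp : p = 4 * n - 1)
    (hprime : Prime p) (hk1 : 2 ≤ k) (hk2 : k ≤ n + 2) :
    ((k - 1) ^ 2 % p < 3 * n - k - 1 →
        (k - 1) ^ 2 % p + (k + 1 - 3 * n) % p < p ∧
        (p + 2 - k - 1) ^ 2 % p + (p + 2 - k + 1 - 3 * n) % p < p) ∧
    (3 * n - k - 1 ≤ (k - 1) ^ 2 % p → (k - 1) ^ 2 % p < 3 * n + k - 3 →
        (p + 2 - k - 1) ^ 2 % p + (p + 2 - k + 1 - 3 * n) % p < p ∧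
        p ≤ (k - 1) ^ 2 % p + (k + 1 - 3 * n) % p) ∧
    (3 * n + k - 3 ≤ (k - 1) ^ 2 % p →
        p ≤ (k - 1) ^ 2 % p + (k + 1 - 3 * n) % p ∧
        p ≤ (p + 2 - k - 1) ^ 2 % p + (p + 2 - k + 1 - 3 * n) % p) := by
  have hp0 : 0 < p := by omega
  have hA : (k + 1 - 3 * n) % p = k + n := by
    rw [show k + 1 - 3 * n = k + n + (-1) * p by omega, Int.add_mul_emod_self_right,
      Int.emod_eq_of_lt (by omega) (by omega)]
  have hB : (p + 2 - k + 1 - 3 * n) % p = n + 2 - k := by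
    rw [show p + 2 - k + 1 - 3 * n = n + 2 - k by omega,
      Int.emod_eq_of_lt (by omega) (by omega)]
  have hC : (p + 2 - k - 1) ^ 2 % p = (k - 1) ^ 2 % p := by
    rw [show (p + 2 - k - 1) ^ 2 = (k - 1) ^ 2 + (p + 2 - 2 * k) * p by ring,
      Int.add_mul_emod_self_right]
  have hm0 : 0 ≤ (k - 1) ^ 2 % p := Int.emod_nonneg _ (by omega)
  have hm1 : (k - 1) ^ 2 % p < p := Int.emod_lt_of_pos _ hp0
  rw [hA, hB, hC]
  omega
end

section
/- Let p = 4n-1 be prime with n ≥ 2, and let n+3 ≤ k ≤ 2n. If r_p((k-1)^2) < k - n - 2, then Γ(k) < p and Γ(p+2-k) < p. If k - n - 2 ≤ r_p((k-1)^2) < 3n - k - 1, then Γ(k) < p ≤ Γ(p+2-k). If 3n - k - 1 ≤ r_p((k-1)^2), then p ≤ Γ(k) and p ≤ Γ(p+2-k). -/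
theorem three_chunks_B (n p k : ℤ) (hn : 2 ≤ n) (hp : p = 4 * n - 1)
    (hprime : Prime p) (hk1 : n + 3 ≤ k) (hk2 : k ≤ 2 * n) :
    ((k - 1) ^ 2 % p < k - n - 2 →
        (k - 1) ^ 2 % p + (k + 1 - 3 * n) % p < p ∧
        (p + 2 - k - 1) ^ 2 % p + (p + 2 - k + 1 - 3 * n) % p < p) ∧
    (k - n - 2 ≤ (k - 1) ^ 2 % p → (k - 1) ^ 2 % p < 3 * n - k - 1 →
        (k - 1) ^ 2 % p + (k + 1 - 3 * n) % p < p ∧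
        p ≤ (p + 2 - k - 1) ^ 2 % p + (p + 2 - k + 1 - 3 * n) % p) ∧
    (3 * n - k - 1 ≤ (k - 1) ^ 2 % p →
        p ≤ (k - 1) ^ 2 % p + (k + 1 - 3 * n) % p ∧
        p ≤ (p + 2 - k - 1) ^ 2 % p + (p + 2 - k + 1 - 3 * n) % p) := by
  have hp0 : 0 < p := by omega
  have h1 : (k + 1 - 3 * n) % p = k + n := by
    have e : k + 1 - 3 * n = k + n + p * (-1) := by omega
    rw [e, Int.add_mul_emod_self_left, Int.emod_eq_of_lt (by omega) (by omega)]
  have h2 : (p + 2 - k + 1 - 3 * n) % p = 5 * n + 1 - k := by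
    have e : p + 2 - k + 1 - 3 * n = 5 * n + 1 - k + p * (-1) := by omega
    rw [e, Int.add_mul_emod_self_left, Int.emod_eq_of_lt (by omega) (by omega)]
  have hsq : (p + 2 - k - 1) ^ 2 % p = (k - 1) ^ 2 % p := by
    have e : (p + 2 - k - 1) ^ 2 = (k - 1) ^ 2 + p * (p + 2 - 2 * k) := by ring
    rw [e, Int.add_mul_emod_self_left]
  have hr0 : 0 ≤ (k - 1) ^ 2 % p := Int.emod_nonneg _ (by omega)
  have hrp : (k - 1) ^ 2 % p < p := Int.emod_lt_of_pos _ hp0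
  rw [h1, h2, hsq]
  omega
end

section
/- Let p = 4n-1 be prime with n > 3. Define A_≥ = {k ∈ ℤ : 2 ≤ k ≤ n+2 and r_p((k-1)^2) ≥ 3n+k-3} and B_< = {k ∈ ℤ : n+3 ≤ k ≤ 2n and r_p((k-1)^2) < k-n-2}. Then the map f(k) = 2n+2-k is a bijection from A_≥ onto B_<. -/
private lemma aux_sq (p a b : ℤ) (hprime : Prime p) (hp3 : p % 4 = 3) (hp0 : 0 < p)
    (hpd : p ∣ a ^ 2 + b ^ 2) : p ∣ b := by
  by_contra hb
  have hP : p.natAbs.Prime := Int.prime_iff_natAbs_prime.mp hprime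
  haveI := Fact.mk hP
  set P := p.natAbs with hPdef
  have hPp : (P : ℤ) = p := Int.natAbs_of_nonneg hp0.le
  have h4 : P % 4 = 3 := by omega
  have hcast : ((a : ZMod P)) ^ 2 + (b : ZMod P) ^ 2 = 0 := by
    have := (ZMod.intCast_zmod_eq_zero_iff_dvd (a ^ 2 + b ^ 2) P).mpr (by rwa [hPp])
    push_cast at this
    linear_combination this
  have hbne : (b : ZMod P) ≠ 0 := by
    rw [Ne, ZMod.intCast_zmod_eq_zero_iff_dvd, hPp]
    exact hb
  have hb2 : (b : ZMod P) ^ 2 ≠ 0 := pow_ne_zero _ hbne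
  have hsq : ((a : ZMod P) / (b : ZMod P)) ^ 2 = -1 := by
    rw [div_pow, div_eq_iff hb2]
    linear_combination hcast
  have hsq' : IsSquare (-1 : ZMod P) := ⟨_, by rw [← hsq, sq]⟩
  rw [ZMod.exists_sq_eq_neg_one_iff] at hsq'
  exact hsq' h4

private lemma shift_lemma (n p k m : ℤ) (hp : p = 4 * n - 1) :
    (2 * n + 1 - k) ^ 2 % p = ((k - 1) ^ 2 % p + (n + 1 - k) - p * m) % p := by
  have hdm := Int.mul_ediv_add_emod ((k - 1) ^ 2) p
  have key : (2 * n + 1 - k) ^ 2 =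
      ((k - 1) ^ 2 % p + (n + 1 - k) - p * m) + p * ((k - 1) ^ 2 / p + (n + 1 - k) + m) := by
    linear_combination (-1 : ℤ) * hdm + (k - n - 1) * hp
  rw [key, Int.add_mul_emod_self_left]

theorem bijection_Age_Blt (n p : ℤ) (hn : 3 < n) (hp : p = 4 * n - 1)
    (hprime : Prime p) :
    Set.BijOn (fun k : ℤ => 2 * n + 2 - k)
      {k : ℤ | 2 ≤ k ∧ k ≤ n + 2 ∧ 3 * n + k - 3 ≤ (k - 1) ^ 2 % p}
      {k : ℤ | n + 3 ≤ k ∧ k ≤ 2 * n ∧ (k - 1) ^ 2 % p < k - n - 2} := by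
  have hp0 : 0 < p := by omega
  have hp3 : p % 4 = 3 := by omega
  -- forward maps-to
  have forward : ∀ k : ℤ, (2 ≤ k ∧ k ≤ n + 2 ∧ 3 * n + k - 3 ≤ (k - 1) ^ 2 % p) →
      (n + 3 ≤ 2 * n + 2 - k ∧ 2 * n + 2 - k ≤ 2 * n ∧
        (2 * n + 2 - k - 1) ^ 2 % p < (2 * n + 2 - k) - n - 2) := by
    intro k ⟨hk2, hkn, hr⟩
    have hr0 : 0 ≤ (k - 1) ^ 2 % p := Int.emod_nonneg _ (by omega)
    have hrlt : (k - 1) ^ 2 % p < p := Int.emod_lt_of_pos _ hp0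
    have hdm := Int.mul_ediv_add_emod ((k - 1) ^ 2) p
    -- Fact 1 : r ≠ p - 1
    have fact1 : (k - 1) ^ 2 % p ≠ p - 1 := by
      intro h
      have hdvd : p ∣ (k - 1) ^ 2 + 1 ^ 2 := by
        refine ⟨(k - 1) ^ 2 / p + 1, ?_⟩
        rw [mul_add, mul_one]
        omega
      have := Int.le_of_dvd one_pos (aux_sq p (k - 1) 1 hprime hp3 hp0 hdvd)
      omega
    -- Fact 2 : r ≠ 3n + k - 3
    have fact2 : (k - 1) ^ 2 % p ≠ 3 * n + k - 3 := by
      intro h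
      have hdvd : p ∣ (2 * k - 3) ^ 2 + 2 ^ 2 := by
        refine ⟨4 * ((k - 1) ^ 2 / p) + 3, ?_⟩
        linear_combination (-4 : ℤ) * hdm + 4 * h - 3 * hp
      have := Int.le_of_dvd (by norm_num) (aux_sq p (2 * k - 3) 2 hprime hp3 hp0 hdvd)
      omega
    have hkle : k ≤ n - 1 := by omega
    have h1 := shift_lemma n p k 1 hp
    rw [Int.emod_eq_of_lt (a := (k - 1) ^ 2 % p + (n + 1 - k) - p * 1)
      (by omega) (by omega)] at h1
    refine ⟨by omega, by omega, ?_⟩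
    rw [show 2 * n + 2 - k - 1 = 2 * n + 1 - k by ring, h1]
    omega
  -- backward maps-to
  have backward : ∀ k : ℤ, (n + 3 ≤ k ∧ k ≤ 2 * n ∧ (k - 1) ^ 2 % p < k - n - 2) →
      (2 ≤ 2 * n + 2 - k ∧ 2 * n + 2 - k ≤ n + 2 ∧
        3 * n + (2 * n + 2 - k) - 3 ≤ (2 * n + 2 - k - 1) ^ 2 % p) := by
    intro k ⟨hk1, hk2, hr⟩
    have hr0 : 0 ≤ (k - 1) ^ 2 % p := Int.emod_nonneg _ (by omega)
    have h1 := shift_lemma n p k (-1) hp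
    rw [Int.emod_eq_of_lt (a := (k - 1) ^ 2 % p + (n + 1 - k) - p * (-1))
      (by omega) (by omega)] at h1
    refine ⟨by omega, by omega, ?_⟩
    rw [show 2 * n + 2 - k - 1 = 2 * n + 1 - k by ring, h1]
    omega
  refine ⟨?_, ?_, ?_⟩
  · intro k hk
    simp only [Set.mem_setOf_eq] at hk ⊢
    exact forward k hk
  · intro a _ b _ h
    simp only at h
    omega
  · intro k hk
    simp only [Set.mem_setOf_eq] at hk
    refine ⟨2 * n + 2 - k, ?_, by simp only; ring⟩
    simp only [Set.mem_setOf_eq]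
    exact backward k hk
end

section
/- Let p = 4n-1 be prime with n > 3. An integer k satisfies n+3 ≤ k ≤ 2n and k-n-2 ≤ r_p((k-1)^2) < 3n-k-1 if and only if there is an integer m with 1 ≤ m ≤ ⌊(n^2-4n+5)/p⌋ such that k = 2n - ⌊sqrt(mp - 1)⌋. -/
lemma no_dvd_sq_add_one (p : ℤ) (hp : Prime p) (hp0 : 0 < p) (h3 : p % 4 = 3)
    (x : ℤ) : ¬ p ∣ x ^ 2 + 1 := by
  intro hdvd
  set P := p.toNat with hP
  have hPp : (P : ℤ) = p := Int.toNat_of_nonneg hp0.le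
  haveI : Fact (Nat.Prime P) := ⟨by
    have h := Int.prime_iff_natAbs_prime.mp hp
    have : P = p.natAbs := by omega
    rwa [this]⟩
  have h0 : ((x ^ 2 + 1 : ℤ) : ZMod P) = 0 := by
    rw [ZMod.intCast_zmod_eq_zero_iff_dvd]
    rwa [hPp]
  have hsq : IsSquare (-1 : ZMod P) := by
    refine ⟨(x : ℤ), ?_⟩
    push_cast at h0
    linear_combination -h0
  have := ZMod.exists_sq_eq_neg_one_iff.mp hsq
  have hP4 : P % 4 = 3 := by omega
  exact this hP4

lemma floor_sqrt_eq (a j : ℤ) (hj : 0 ≤ j) (h1 : j ^ 2 ≤ a) (h2 : a < (j + 1) ^ 2) :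
    ⌊Real.sqrt (a : ℝ)⌋ = j := by
  have ha : (0 : ℝ) ≤ (a : ℝ) := by
    have : (0:ℤ) ≤ a := by nlinarith
    exact_mod_cast this
  rw [Int.floor_eq_iff]
  constructor
  · rw [Real.le_sqrt (by exact_mod_cast hj) ha]
    exact_mod_cast h1
  · have hj1 : (0:ℝ) < (j:ℝ) + 1 := by
      have : (0:ℤ) < j + 1 := by omega
      exact_mod_cast this
    rw [Real.sqrt_lt' hj1]
    exact_mod_cast h2

lemma floor_sqrt_bounds (a : ℤ) (ha : 0 ≤ a) :
    0 ≤ ⌊Real.sqrt (a : ℝ)⌋ ∧ ⌊Real.sqrt (a : ℝ)⌋ ^ 2 ≤ a ∧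
      a < (⌊Real.sqrt (a : ℝ)⌋ + 1) ^ 2 := by
  have haR : (0 : ℝ) ≤ (a : ℝ) := by exact_mod_cast ha
  set j := ⌊Real.sqrt (a : ℝ)⌋ with hjdef
  have hs0 : (0:ℝ) ≤ Real.sqrt (a:ℝ) := Real.sqrt_nonneg _
  have hj0 : 0 ≤ j := by
    rw [hjdef]; exact Int.floor_nonneg.mpr hs0
  have hle : (j : ℝ) ≤ Real.sqrt (a:ℝ) := Int.floor_le _
  have hlt : Real.sqrt (a:ℝ) < (j : ℝ) + 1 := Int.lt_floor_add_one _
  have hsq : Real.sqrt (a:ℝ) ^ 2 = (a:ℝ) := Real.sq_sqrt haR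
  refine ⟨hj0, ?_, ?_⟩
  · have hj0R : (0:ℝ) ≤ (j:ℝ) := by exact_mod_cast hj0
    have : ((j:ℝ)) ^ 2 ≤ (a:ℝ) := by nlinarith [mul_le_mul hle hle hj0R hs0]
    exact_mod_cast this
  · have : (a:ℝ) < ((j:ℝ) + 1) ^ 2 := by nlinarith
    exact_mod_cast this

theorem Bbet_characterization (n p k : ℤ) (hn : 3 < n) (hp : p = 4 * n - 1)
    (hprime : Prime p) :
    (n + 3 ≤ k ∧ k ≤ 2 * n ∧ k - n - 2 ≤ (k - 1) ^ 2 % p ∧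
        (k - 1) ^ 2 % p < 3 * n - k - 1) ↔
      ∃ m : ℤ, 1 ≤ m ∧ m ≤ (n ^ 2 - 4 * n + 5) / p ∧
        k = 2 * n - ⌊Real.sqrt ((m * p - 1 : ℤ) : ℝ)⌋ := by
  have hp0 : 0 < p := by omega
  have hp4 : p % 4 = 3 := by omega
  have hnd : ∀ x : ℤ, ¬ p ∣ x ^ 2 + 1 := no_dvd_sq_add_one p hprime hp0 hp4
  constructor
  · rintro ⟨hk1, hk2, hr1, hr2⟩
    set j := 2 * n - k with hjdef
    have hj0 : 0 ≤ j := by omega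
    have hj3 : j ≤ n - 3 := by omega
    -- (k-1)^2 = (n-j-1)*p + (n + j + j^2)
    have hkey : (k - 1) ^ 2 = (n - j - 1) * p + (n + j + j ^ 2) := by
      rw [hp, hjdef]; ring
    set m := (n + j + j ^ 2) / p with hmdef
    have hdiv := Int.mul_ediv_add_emod (n + j + j ^ 2) p
    have hre : (n - j - 1) * p + (n + j + j ^ 2) = (n + j + j ^ 2) + p * (n - j - 1) := by
      ring
    have hr_eq : (k - 1) ^ 2 % p = (n + j + j ^ 2) % p := by
      rw [hkey, hre, Int.add_mul_emod_self_left]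
    rw [hr_eq] at hr1 hr2
    -- translate bounds on k
    have hb1 : n - j - 2 ≤ (n + j + j ^ 2) % p := by omega
    have hb2 : (n + j + j ^ 2) % p < n + j - 1 := by omega
    have hmp1 : j ^ 2 + 2 ≤ m * p := by
      have : p * m = m * p := by ring
      linarith [hdiv, hb2, this.symm ▸ hdiv]
    have hmp2 : m * p ≤ j ^ 2 + 2 * j + 2 := by nlinarith [hdiv, hb1]
    have hne : m * p ≠ (j + 1) ^ 2 + 1 := by
      intro h
      exact hnd (j + 1) ⟨m, by linarith⟩
    have hlow : j ^ 2 ≤ m * p - 1 := by nlinarith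
    have hhigh : m * p - 1 < (j + 1) ^ 2 := by
      have h' : m * p - 1 ≤ (j + 1) ^ 2 := by nlinarith
      have : m * p - 1 ≠ (j + 1) ^ 2 := fun h => hne (by linarith)
      omega
    have hfl : ⌊Real.sqrt ((m * p - 1 : ℤ) : ℝ)⌋ = j :=
      floor_sqrt_eq _ _ hj0 hlow hhigh
    have hm0 : 0 < m := by
      have hmp0 : 0 < m * p := by nlinarith [sq_nonneg j]
      rcases mul_pos_iff.mp hmp0 with ⟨h1, _⟩ | ⟨_, h2⟩
      · exact h1
      · linarith
    refine ⟨m, hm0, ?_, ?_⟩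
    · rw [Int.le_ediv_iff_mul_le hp0]
      nlinarith
    · rw [hfl]; omega
  · rintro ⟨m, hm1, hm2, hkeq⟩
    have hmp : m * p ≤ n ^ 2 - 4 * n + 5 := (Int.le_ediv_iff_mul_le hp0).mp hm2
    have hple : p ≤ m * p := le_mul_of_one_le_left hp0.le hm1
    have ha0 : (0 : ℤ) ≤ m * p - 1 := by omega
    obtain ⟨hj0, hjle, hjlt⟩ := floor_sqrt_bounds (m * p - 1) ha0
    set j := ⌊Real.sqrt ((m * p - 1 : ℤ) : ℝ)⌋ with hjdef
    have hne : m * p - 1 ≠ j ^ 2 := by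
      intro h
      exact hnd j ⟨m, by linarith⟩
    have hlow : j ^ 2 + 2 ≤ m * p := by omega
    have hhigh : m * p ≤ j ^ 2 + 2 * j + 1 := by nlinarith
    have hjn2 : j ≤ n - 2 := by
      by_contra h
      push_neg at h
      have h' : n - 1 ≤ j := by omega
      nlinarith [mul_le_mul h' h' (by omega : (0:ℤ) ≤ n - 1) (by omega : (0:ℤ) ≤ j)]
    have hjn3 : j ≤ n - 3 := by
      rcases eq_or_lt_of_le hjn2 with h | h
      · exfalso
        apply hne
        nlinarith
      · omega
    have hk : k = 2 * n - j := hkeq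
    set s := n + j + j ^ 2 - m * p with hsdef
    have hs1 : n - j - 1 ≤ s := by omega
    have hs2 : s ≤ n + j - 2 := by omega
    have hs0 : 0 ≤ s := by omega
    have hsp : s < p := by omega
    have hkey : (k - 1) ^ 2 = s + p * ((n - j - 1) + m) := by
      rw [hk, hsdef, hp]; ring
    have hmod : (k - 1) ^ 2 % p = s := by
      rw [hkey, Int.add_mul_emod_self_left, Int.emod_eq_of_lt hs0 hsp]
    refine ⟨by omega, by omega, ?_, ?_⟩
    · rw [hmod]; omega
    · rw [hmod]; omega
end

section
/- Let p = 4n-1 be prime with n > 3. Then the set B_bet = {k ∈ ℤ : n+3 ≤ k ≤ 2n and k-n-2 ≤ r_p((k-1)^2) < 3n-k-1} has cardinality ⌊(n^2-4n+5)/p⌋. -/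
private lemma ediv_neg_one' {p s : ℤ} (hp : 0 < p) (h1 : -p ≤ s) (h2 : s < 0) : s / p = -1 := by
  have h : (s + 1 * p) / p = s / p + 1 := Int.add_mul_ediv_right s 1 hp.ne'
  have h0 : (s + 1 * p) / p = 0 := Int.ediv_eq_zero_of_lt (by linarith) (by linarith)
  omega

private lemma Icc_insert_top (a b : ℤ) (h : a ≤ b + 1) :
    Finset.Icc a (b + 1) = insert (b + 1) (Finset.Icc a b) := by
  ext x
  simp only [Finset.mem_Icc, Finset.mem_insert]
  omega

private lemma telescope (F : ℤ → ℤ) (a : ℤ) (N : ℕ) :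
    ∑ k ∈ Finset.Icc (a + 1) (a + N), (F (k - 1) - F k + 1) = F a - F (a + N) + N := by
  induction N with
  | zero => simp
  | succ m ih =>
    have h1 : (a + ((m : ℤ) + 1)) = (a + (m : ℤ)) + 1 := by ring
    push_cast
    rw [h1, Icc_insert_top _ _ (by omega), Finset.sum_insert (by simp [Finset.mem_Icc]), ih]
    have h2 : a + (m : ℤ) + 1 - 1 = a + (m : ℤ) := by ring
    rw [h2]
    ring

theorem Bbet_card (n p : ℤ) (hn : 3 < n) (hp : p = 4 * n - 1)
    (hprime : Prime p) :
    ({k : ℤ | n + 3 ≤ k ∧ k ≤ 2 * n ∧ k - n - 2 ≤ (k - 1) ^ 2 % p ∧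
        (k - 1) ^ 2 % p < 3 * n - k - 1}.ncard : ℤ) = (n ^ 2 - 4 * n + 5) / p := by
  subst hp
  have hp0 : (0 : ℤ) < 4 * n - 1 := by omega
  set F : ℤ → ℤ := fun x => (x ^ 2 - x + n + 1) / (4 * n - 1) with hF
  -- Step 1: the set as a finset filter
  have hset : {k : ℤ | n + 3 ≤ k ∧ k ≤ 2 * n ∧ k - n - 2 ≤ (k - 1) ^ 2 % (4 * n - 1) ∧
        (k - 1) ^ 2 % (4 * n - 1) < 3 * n - k - 1} =
      ↑((Finset.Icc (n + 3) (2 * n)).filter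
        (fun k => k - n - 2 ≤ (k - 1) ^ 2 % (4 * n - 1) ∧
          (k - 1) ^ 2 % (4 * n - 1) < 3 * n - k - 1)) := by
    ext k
    simp [Finset.mem_Icc, and_assoc]
  rw [hset, Set.ncard_coe_finset]
  -- Step 2: card as a sum of indicators
  rw [Finset.card_filter]
  push_cast
  -- Step 3: pointwise identity
  have hpt : ∀ k ∈ Finset.Icc (n + 3) (2 * n),
      (if k - n - 2 ≤ (k - 1) ^ 2 % (4 * n - 1) ∧
          (k - 1) ^ 2 % (4 * n - 1) < 3 * n - k - 1 then (1 : ℤ) else 0)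
        = F (k - 1) - F k + 1 := by
    intro k hk
    rw [Finset.mem_Icc] at hk
    obtain ⟨q, r, hqr, hr0, hrp⟩ : ∃ q r : ℤ, (k - 1) ^ 2 = (4 * n - 1) * q + r ∧
        0 ≤ r ∧ r < 4 * n - 1 :=
      ⟨(k - 1) ^ 2 / (4 * n - 1), (k - 1) ^ 2 % (4 * n - 1), (Int.mul_ediv_add_emod _ _).symm,
        Int.emod_nonneg _ hp0.ne', Int.emod_lt_of_pos _ hp0⟩
    have hrmod : (k - 1) ^ 2 % (4 * n - 1) = r := by
      rw [hqr, add_comm, Int.add_mul_emod_self_left, Int.emod_eq_of_lt hr0 hrp]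
    rw [hrmod]
    have e1 : F (k - 1) = (r - (k - 1) + n + 1) / (4 * n - 1) + q := by
      have h : (k - 1) ^ 2 - (k - 1) + n + 1 = (r - (k - 1) + n + 1) + q * (4 * n - 1) := by
        linear_combination hqr
      simp only [hF, h, Int.add_mul_ediv_right _ _ hp0.ne']
    have e2 : F k = (r + (k - 1) - 3 * n + 2) / (4 * n - 1) + (q + 1) := by
      have h : k ^ 2 - k + n + 1 = (r + (k - 1) - 3 * n + 2) + (q + 1) * (4 * n - 1) := by
        linear_combination hqr
      simp only [hF, h, Int.add_mul_ediv_right _ _ hp0.ne']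
    rw [e1, e2]
    have hd1 : (r - (k - 1) + n + 1) / (4 * n - 1) = if k - n - 2 ≤ r then 0 else -1 := by
      split
      · exact Int.ediv_eq_zero_of_lt (by omega) (by omega)
      · exact ediv_neg_one' hp0 (by omega) (by omega)
    have hd2 : (r + (k - 1) - 3 * n + 2) / (4 * n - 1) =
        if 3 * n - k - 1 ≤ r then 0 else -1 := by
      split
      · exact Int.ediv_eq_zero_of_lt (by omega) (by omega)
      · exact ediv_neg_one' hp0 (by omega) (by omega)
    rw [hd1, hd2]
    by_cases h1 : k - n - 2 ≤ r <;> by_cases h2 : 3 * n - k - 1 ≤ r <;>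
      simp [h1, h2] <;> omega
  rw [Finset.sum_congr rfl hpt]
  -- Step 4: telescoping
  have hNat : (2 * n : ℤ) = (n + 2) + ((n - 2).toNat : ℤ) := by omega
  rw [show ((n : ℤ) + 3) = (n + 2) + 1 by ring, hNat, telescope F (n + 2) (n - 2).toNat,
    ← hNat]
  -- Step 5: evaluate
  have e3 : (n + 2) ^ 2 - (n + 2) + n + 1 = (n ^ 2 - 4 * n + 5) + 2 * (4 * n - 1) := by ring
  have e4 : (2 * n) ^ 2 - 2 * n + n + 1 = 1 + n * (4 * n - 1) := by ring
  have hF1 : F (n + 2) = (n ^ 2 - 4 * n + 5) / (4 * n - 1) + 2 := by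
    simp only [hF, e3, Int.add_mul_ediv_right _ _ hp0.ne']
  have hF2 : F (2 * n) = n := by
    simp only [hF, e4, Int.add_mul_ediv_right _ _ hp0.ne']
    rw [Int.ediv_eq_zero_of_lt (by omega) (by omega)]
    ring
  rw [hF1, hF2]
  have : ((n - 2).toNat : ℤ) = n - 2 := by omega
  rw [this]
  ring
end

section
/- Let p = 4n-1 be prime with n > 3. Then |{k ∈ ℤ : 2 ≤ k ≤ 4n-1 and Γ(k) ≥ p}| = 2n - 2, where Γ(k) = r_p((k-1)^2) + r_p(k+1-3n). -/
private lemma gauss_int (a b : ℤ) (h : a - 1 ≤ b) :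
    2 * ∑ i ∈ Finset.Icc a b, i = (a + b) * (b + 1 - a) := by
  refine Int.le_induction (motive := fun b _ => 2 * ∑ i ∈ Finset.Icc a b, i = (a + b) * (b + 1 - a)) (m := a - 1) ?_ ?_ b h
  · show 2 * ∑ i ∈ Finset.Icc a (a-1), i = (a + (a-1)) * ((a-1) + 1 - a)
    rw [Finset.Icc_eq_empty (by omega), Finset.sum_empty, mul_zero]
    ring
  · intro b hb ih
    show 2 * ∑ i ∈ Finset.Icc a (b+1), i = (a + (b+1)) * ((b+1) + 1 - a)
    have hins : Finset.Icc a (b+1) = insert (b+1) (Finset.Icc a b) := by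
      ext x; simp [Finset.mem_Icc]; omega
    rw [hins, Finset.sum_insert (by simp), mul_add, ih]
    ring

private lemma card_Icc_int (a b : ℤ) (h : a ≤ b + 1) :
    ((Finset.Icc a b).card : ℤ) = b + 1 - a := by
  rw [Int.card_Icc, Int.toNat_of_nonneg (by omega)]

private lemma sum_Icc_split (a b c : ℤ) (h1 : a ≤ b + 1) (h2 : b ≤ c) (f : ℤ → ℤ) :
    ∑ k ∈ Finset.Icc a c, f k =
      ∑ k ∈ Finset.Icc a b, f k + ∑ k ∈ Finset.Icc (b+1) c, f k := by
  rw [← Finset.sum_union]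
  · congr 1
    ext x; simp [Finset.mem_Icc]; omega
  · rw [Finset.disjoint_left]
    intro x hx hx'
    simp [Finset.mem_Icc] at hx hx'
    omega

private lemma sum_shift (a b c : ℤ) (f : ℤ → ℤ) :
    ∑ k ∈ Finset.Icc a b, f k = ∑ k ∈ Finset.Icc (a+c) (b+c), f (k - c) := by
  rw [← Finset.map_add_right_Icc a b c, Finset.sum_map]
  apply Finset.sum_congr rfl
  intro x hx
  simp [addRightEmbedding]

private lemma mod_split (p : ℤ) (hp : 0 < p) (x y : ℤ) :
    x % p + y % p - (x + y) % p = if p ≤ x % p + y % p then p else 0 := by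
  have hx0 := Int.emod_nonneg x (ne_of_gt hp)
  have hx1 := Int.emod_lt_of_pos x hp
  have hy0 := Int.emod_nonneg y (ne_of_gt hp)
  have hy1 := Int.emod_lt_of_pos y hp
  have hxy : (x + y) % p = (x % p + y % p) % p := by rw [Int.add_emod]
  set a := x % p with ha
  set b := y % p with hb
  by_cases h : p ≤ a + b
  · rw [if_pos h, hxy]
    have he0 := Int.add_mul_emod_self_left (a + b - p) p 1
    have he1 : (a + b) % p = (a + b - p) % p := by rw [← he0]; ring_nf
    rw [he1, Int.emod_eq_of_lt (by omega) (by omega)]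
    omega
  · rw [if_neg h, hxy, Int.emod_eq_of_lt (by omega) (by omega)]
    omega

private lemma sq_add_one_mod (n p : ℤ) (hn : 3 < n) (hp : p = 4 * n - 1)
    (hprime : Prime p) (r : ℤ) : (r^2 + 1) % p = r^2 % p + 1 := by
  have hp0 : 0 < p := by omega
  have h0 := Int.emod_nonneg (r^2) (ne_of_gt hp0)
  have h1 := Int.emod_lt_of_pos (r^2) hp0
  have hed := Int.emod_add_mul_ediv (r^2) p
  have hne : r^2 % p ≠ p - 1 := by
    intro h
    have hdvd : p ∣ r^2 + 1 := ⟨r^2 / p + 1, by linarith [mul_add p (r^2/p) 1, mul_one p]⟩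
    have hq : (p.natAbs).Prime := Int.prime_iff_natAbs_prime.mp hprime
    haveI : Fact (p.natAbs).Prime := ⟨hq⟩
    have hq4 : p.natAbs % 4 = 3 := by omega
    have hz : ((r^2 + 1 : ℤ) : ZMod p.natAbs) = 0 := by
      rw [ZMod.intCast_zmod_eq_zero_iff_dvd]
      exact_mod_cast Int.natAbs_dvd.mpr hdvd
    have hsq : ((r : ZMod p.natAbs))^2 = -1 := by
      push_cast at hz
      linear_combination hz
    have : IsSquare (-1 : ZMod p.natAbs) := ⟨(r : ZMod p.natAbs), by rw [← hsq]; ring⟩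
    exact (ZMod.exists_sq_eq_neg_one_iff.mp this) hq4
  rw [show r^2 + 1 = (r^2 % p + 1) + p * (r^2 / p) by linarith,
    Int.add_mul_emod_self_left, Int.emod_eq_of_lt (by omega) (by omega)]

theorem total_jumps_count (n p : ℤ) (hn : 3 < n) (hp : p = 4 * n - 1)
    (hprime : Prime p) :
    ({k : ℤ | 2 ≤ k ∧ k ≤ 4 * n - 1 ∧
        p ≤ (k - 1) ^ 2 % p + (k + 1 - 3 * n) % p}.ncard : ℤ) = 2 * n - 2 := by
  have hp0 : 0 < p := by omega
  set A := Finset.Icc (2:ℤ) (4*n-1) with hA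
  set cond := fun k : ℤ => p ≤ (k - 1) ^ 2 % p + (k + 1 - 3 * n) % p with hcond
  have hset : {k : ℤ | 2 ≤ k ∧ k ≤ 4 * n - 1 ∧
      p ≤ (k - 1) ^ 2 % p + (k + 1 - 3 * n) % p} = ↑(A.filter cond) := by
    ext k
    simp [hA, hcond, Finset.mem_Icc, and_assoc]
  rw [hset, Set.ncard_coe_finset]
  -- key counting identity
  have hcount : p * ((A.filter cond).card : ℤ) =
      ∑ k ∈ A, ((k-1)^2 % p + (k+1-3*n) % p - ((k-1)^2 + (k+1-3*n)) % p) := by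
    have : ∀ k ∈ A, (k-1)^2 % p + (k+1-3*n) % p - ((k-1)^2 + (k+1-3*n)) % p
        = if cond k then p else 0 := fun k _ => mod_split p hp0 _ _
    rw [Finset.sum_congr rfl this, ← Finset.sum_filter, Finset.sum_const,
      nsmul_eq_mul, mul_comm]
  -- sum b
  have hb : 2 * ∑ k ∈ A, (k+1-3*n) % p = 16*n^2 - 14*n := by
    rw [hA, sum_Icc_split 2 (3*n-2) (4*n-1) (by omega) (by omega)]
    have e1 : ∑ k ∈ Finset.Icc (2:ℤ) (3*n-2), (k+1-3*n) % p
        = ∑ k ∈ Finset.Icc (2:ℤ) (3*n-2), (k + n) := by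
      apply Finset.sum_congr rfl
      intro k hk
      simp only [Finset.mem_Icc] at hk
      rw [show k+1-3*n = (k+n) + p * (-1) by rw [hp]; ring,
        Int.add_mul_emod_self_left, Int.emod_eq_of_lt (by omega) (by omega)]
    have e2 : ∑ k ∈ Finset.Icc (3*n-2+1) (4*n-1), (k+1-3*n) % p
        = ∑ k ∈ Finset.Icc (3*n-2+1) (4*n-1), (k + (1-3*n)) := by
      apply Finset.sum_congr rfl
      intro k hk
      simp only [Finset.mem_Icc] at hk
      rw [Int.emod_eq_of_lt (by omega) (by omega)]
      ring
    rw [e1, e2, Finset.sum_add_distrib, Finset.sum_add_distrib,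
      Finset.sum_const, Finset.sum_const, nsmul_eq_mul, nsmul_eq_mul,
      card_Icc_int _ _ (by omega), card_Icc_int _ _ (by omega)]
    have g1 := gauss_int 2 (3*n-2) (by omega)
    have g2 := gauss_int (3*n-2+1) (4*n-1) (by omega)
    nlinarith [g1, g2]
  -- sum a reindexed
  have ha : ∑ k ∈ A, (k-1)^2 % p = ∑ j ∈ Finset.Icc (1:ℤ) (4*n-2), j^2 % p := by
    rw [hA, sum_shift 2 (4*n-1) (-1), show (2:ℤ)+(-1) = 1 by ring,
      show (4*n-1:ℤ)+(-1) = 4*n-2 by ring]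
    apply Finset.sum_congr rfl
    intro j _
    congr 1
    ring
  -- sum c reindexed
  have hc : ∑ k ∈ A, ((k-1)^2 + (k+1-3*n)) % p
      = ∑ j ∈ Finset.Icc (2-2*n) (2*n-1), (j^2+1) % p := by
    have e0 : ∑ k ∈ A, ((k-1)^2 + (k+1-3*n)) % p
        = ∑ k ∈ A, ((k-2*n)^2+1) % p := by
      apply Finset.sum_congr rfl
      intro k _
      rw [show (k-1)^2 + (k+1-3*n) = ((k-2*n)^2+1) + p * (k-n-1) by rw [hp]; ring,
        Int.add_mul_emod_self_left]
    rw [e0, hA, sum_shift 2 (4*n-1) (-(2*n)), show (2:ℤ)+(-(2*n)) = 2-2*n by ring,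
      show (4*n-1:ℤ)+(-(2*n)) = 2*n-1 by ring]
    apply Finset.sum_congr rfl
    intro j _
    congr 1
    ring
  -- a minus c
  have hac : ∑ k ∈ A, (k-1)^2 % p - ∑ k ∈ A, ((k-1)^2 + (k+1-3*n)) % p = 2 - 3*n := by
    have hpt : ∀ s : Finset ℤ, ∑ j ∈ s, (j^2+1) % p = ∑ j ∈ s, j^2 % p + (s.card : ℤ) := by
      intro s
      rw [Finset.sum_congr rfl (fun j _ => sq_add_one_mod n p hn hp hprime j),
        Finset.sum_add_distrib, Finset.sum_const, nsmul_eq_mul, mul_one]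
    have hneg : ∑ j ∈ Finset.Icc (2-2*n) (-1), (j^2+1) % p
        = ∑ j ∈ Finset.Icc (2*n+1) (4*n-2), (j^2+1) % p := by
      rw [sum_shift (2-2*n) (-1) p, hp]
      rw [show (2-2*n) + (4*n-1) = 2*n+1 by ring, show (-1) + (4*n-1) = 4*n-2 by ring]
      apply Finset.sum_congr rfl
      intro j _
      rw [show (j-(4*n-1))^2 + 1 = (j^2+1) + (4*n-1) * ((4*n-1) - 2*j) by ring]
      rw [← hp, Int.add_mul_emod_self_left]
    have t1 : ∑ j ∈ Finset.Icc (2*n) (2*n), j^2 % p = n := by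
      rw [Finset.Icc_self, Finset.sum_singleton,
        show (2*n)^2 = n + p * n by rw [hp]; ring,
        Int.add_mul_emod_self_left, Int.emod_eq_of_lt (by omega) (by omega)]
    have hA2 : ∑ j ∈ Finset.Icc (1:ℤ) (4*n-2), j^2 % p
        = ∑ j ∈ Finset.Icc (1:ℤ) (2*n-1), j^2 % p + n
          + ∑ j ∈ Finset.Icc (2*n+1) (4*n-2), j^2 % p := by
      rw [sum_Icc_split 1 (2*n-1) (4*n-2) (by omega) (by omega) (fun j => j^2 % p),
        show (2*n-1+1:ℤ) = 2*n by ring,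
        sum_Icc_split (2*n) (2*n) (4*n-2) (by omega) (by omega) (fun j => j^2 % p), t1]
      ring
    have hz : ∑ j ∈ Finset.Icc (0:ℤ) (2*n-1), j^2 % p
        = ∑ j ∈ Finset.Icc (1:ℤ) (2*n-1), j^2 % p := by
      rw [sum_Icc_split 0 0 (2*n-1) (by omega) (by omega) (fun j => j^2 % p),
        show (0+1:ℤ) = 1 by ring]
      norm_num
    have hC2 : ∑ j ∈ Finset.Icc (2-2*n) (2*n-1), (j^2+1) % p
        = ∑ j ∈ Finset.Icc (1:ℤ) (2*n-1), j^2 % p + 2*n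
          + (∑ j ∈ Finset.Icc (2*n+1) (4*n-2), j^2 % p + (2*n-2)) := by
      rw [sum_Icc_split (2-2*n) (-1) (2*n-1) (by omega) (by omega) (fun j => (j^2+1) % p),
        show (-1+1:ℤ) = 0 by ring, hneg, hpt, hpt, hz,
        card_Icc_int _ _ (by omega), card_Icc_int _ _ (by omega)]
      ring
    rw [ha, hc, hA2, hC2]
    ring
  -- combine
  have hsum : ∑ k ∈ A, ((k-1)^2 % p + (k+1-3*n) % p - ((k-1)^2 + (k+1-3*n)) % p)
      = ∑ k ∈ A, (k-1)^2 % p + ∑ k ∈ A, (k+1-3*n) % p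
        - ∑ k ∈ A, ((k-1)^2 + (k+1-3*n)) % p := by
    rw [Finset.sum_sub_distrib, Finset.sum_add_distrib]
  have h2 : 2 * (p * ((A.filter cond).card : ℤ)) = 2 * (p * (2*n-2)) := by
    rw [hcount, hsum]
    linear_combination 2*hac + hb - (4*n-4)*hp
  have hfinal : p * ((A.filter cond).card : ℤ) = p * (2*n-2) := by linarith
  exact mul_left_cancel₀ (by omega : p ≠ 0) hfinal
end

section
/- Let p = 4n-1 be prime with n > 3. Then |{k ∈ ℤ : 2 ≤ k ≤ 2n and Γ(k) ≥ p}| = n and |{k ∈ ℤ : 2n+1 ≤ k ≤ 4n and Γ(k) ≥ p}| = n - 2, where Γ(k) = r_p((k-1)^2) + r_p(k+1-3n). -/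
namespace JumpsAux

lemma carry {p : ℤ} (hp0 : 0 < p) (a b : ℤ) :
    (if p ≤ a % p + b % p then p else 0) = a % p + b % p - (a + b) % p := by
  have h1 : (a + b) % p = (a % p + b % p) % p := Int.add_emod a b p
  have ha0 := Int.emod_nonneg a hp0.ne'
  have hb0 := Int.emod_nonneg b hp0.ne'
  have ha1 := Int.emod_lt_of_pos a hp0
  have hb1 := Int.emod_lt_of_pos b hp0
  split_ifs with h
  · have h2 := Int.sub_emod_right (a % p + b % p) p
    have h3 : (a % p + b % p - p) % p = a % p + b % p - p :=
      Int.emod_eq_of_lt (by omega) (by omega)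
    omega
  · have h2 : (a % p + b % p) % p = a % p + b % p :=
      Int.emod_eq_of_lt (by omega) (by omega)
    omega

lemma gauss (a : ℤ) : ∀ b : ℤ, a - 1 ≤ b →
    (∑ j ∈ Finset.Icc a b, j) * 2 = (b - a + 1) * (a + b) := by
  refine Int.le_induction ?_ ?_
  · rw [Finset.Icc_eq_empty (by omega)]
    rw [show a - 1 - a + 1 = (0:ℤ) from by ring]
    simp
  · intro b hb ih
    rw [show Finset.Icc a (b + 1) = insert (b + 1) (Finset.Icc a b) from by
        ext x; simp [Finset.mem_Icc]; omega,
      Finset.sum_insert (by simp [Finset.mem_Icc])]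
    linear_combination ih

lemma cardIcc (a b : ℤ) (h : a - 1 ≤ b) : ((Finset.Icc a b).card : ℤ) = b + 1 - a := by
  rw [Int.card_Icc]
  omega

lemma sq_add_one_emod {n p : ℤ} (hn : 3 < n) (hp : p = 4 * n - 1) (hprime : Prime p)
    (a : ℤ) : (a ^ 2 + 1) % p = a ^ 2 % p + 1 := by
  have hp0 : 0 < p := by omega
  have ha0 := Int.emod_nonneg (a ^ 2) hp0.ne'
  have ha1 := Int.emod_lt_of_pos (a ^ 2) hp0
  have hne : a ^ 2 % p ≠ p - 1 := by
    intro h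
    have hdvd : p ∣ a ^ 2 + 1 := by
      have : (a ^ 2 + 1) % p = 0 := by
        rw [Int.add_emod, h]
        have h1 : (1 : ℤ) % p = 1 := Int.emod_eq_of_lt (by omega) (by omega)
        rw [h1, show p - 1 + 1 = p by ring]
        simp
      exact Int.dvd_of_emod_eq_zero this
    set q := p.natAbs with hq
    have hqp : Nat.Prime q := Int.prime_iff_natAbs_prime.mp hprime
    haveI : Fact (Nat.Prime q) := ⟨hqp⟩
    have hq4 : q % 4 = 3 := by omega
    have hdvd' : (q : ℤ) ∣ a ^ 2 + 1 := by rwa [Int.natAbs_dvd]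
    have hz : ((a : ZMod q) ^ 2 + 1) = 0 := by
      have := (ZMod.intCast_zmod_eq_zero_iff_dvd (a ^ 2 + 1) q).mpr hdvd'
      push_cast at this
      exact this
    have hsq : IsSquare (-1 : ZMod q) := ⟨(a : ZMod q), by linear_combination -hz⟩
    exact (ZMod.exists_sq_eq_neg_one_iff.mp hsq) hq4
  rw [Int.add_emod, show (1:ℤ) % p = 1 from Int.emod_eq_of_lt (by omega) (by omega)]
  exact Int.emod_eq_of_lt (by omega) (by omega)

end JumpsAux

theorem jumps_count_halves (n p : ℤ) (hn : 3 < n) (hp : p = 4 * n - 1)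
    (hprime : Prime p) :
    ({k : ℤ | 2 ≤ k ∧ k ≤ 2 * n ∧
        p ≤ (k - 1) ^ 2 % p + (k + 1 - 3 * n) % p}.ncard : ℤ) = n ∧
    ({k : ℤ | 2 * n + 1 ≤ k ∧ k ≤ 4 * n ∧
        p ≤ (k - 1) ^ 2 % p + (k + 1 - 3 * n) % p}.ncard : ℤ) = n - 2 := by
  have hp0 : (0:ℤ) < p := by omega
  have hsq := JumpsAux.sq_add_one_emod hn hp hprime
  have hcard : ((Finset.Icc (2:ℤ) (2*n)).card : ℤ) = 2*n - 1 := by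
    rw [JumpsAux.cardIcc 2 (2*n) (by omega)]; ring
  -- U
  have hU : ∑ m ∈ Finset.Icc (1:ℤ) (2*n-1), (m^2+1) % p
      = (∑ k ∈ Finset.Icc (2:ℤ) (2*n), (k-1)^2 % p) + (2*n-1) := by
    have e : ∑ m ∈ Finset.Icc (1:ℤ) (2*n-1), (m^2+1) % p
        = ∑ k ∈ Finset.Icc (2:ℤ) (2*n), ((k-1)^2+1) % p := by
      refine Finset.sum_nbij' (fun m => m + 1) (fun k => k - 1) ?_ ?_ ?_ ?_ ?_
      · intro m hm; simp only [Finset.mem_Icc] at *; omega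
      · intro k hk; simp only [Finset.mem_Icc] at *; omega
      · intro m _; ring
      · intro k _; ring
      · intro m _
        show (m^2+1) % p = ((m+1-1)^2+1) % p
        congr 1; ring
    rw [e, Finset.sum_congr rfl (fun k _ => hsq (k-1)), Finset.sum_add_distrib,
      Finset.sum_const, nsmul_eq_mul, hcard, mul_one]
  constructor
  · -- first half
    have e1 : {k : ℤ | 2 ≤ k ∧ k ≤ 2*n ∧ p ≤ (k-1)^2 % p + (k+1-3*n) % p}
        = ↑((Finset.Icc 2 (2*n)).filter (fun k => p ≤ (k-1)^2 % p + (k+1-3*n) % p)) := by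
      ext k
      simp only [Set.mem_setOf_eq, Finset.coe_filter, Finset.mem_Icc]
      tauto
    rw [e1, Set.ncard_coe_finset]
    have key : (((Finset.Icc 2 (2*n)).filter
          (fun k => p ≤ (k-1)^2 % p + (k+1-3*n) % p)).card : ℤ) * p
        = (∑ k ∈ Finset.Icc (2:ℤ) (2*n), (k-1)^2 % p)
          + (∑ k ∈ Finset.Icc (2:ℤ) (2*n), (k+1-3*n) % p)
          - ∑ k ∈ Finset.Icc (2:ℤ) (2*n), ((k-1)^2 + (k+1-3*n)) % p := by
      rw [← Finset.sum_add_distrib, ← Finset.sum_sub_distrib,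
        Finset.sum_congr rfl (fun k _ => (JumpsAux.carry hp0 ((k-1)^2) (k+1-3*n)).symm),
        ← Finset.sum_filter, Finset.sum_const, nsmul_eq_mul]
    have h2S2 : (∑ k ∈ Finset.Icc (2:ℤ) (2*n), (k+1-3*n) % p) * 2 = 8*n^2 - 2 := by
      have step : ∀ k ∈ Finset.Icc (2:ℤ) (2*n), (k+1-3*n) % p = k + n := by
        intro k hk
        simp only [Finset.mem_Icc] at hk
        rw [show k+1-3*n = (k+n) + p * (-1) from by rw [hp]; ring,
          Int.add_mul_emod_self_left]
        exact Int.emod_eq_of_lt (by omega) (by omega)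
      rw [Finset.sum_congr rfl step, Finset.sum_add_distrib, Finset.sum_const,
        nsmul_eq_mul, hcard]
      have g := JumpsAux.gauss 2 (2*n) (by omega)
      linear_combination g
    have hS3 : ∑ k ∈ Finset.Icc (2:ℤ) (2*n), ((k-1)^2 + (k+1-3*n)) % p
        = (∑ k ∈ Finset.Icc (2:ℤ) (2*n), (k-1)^2 % p) + (n - 1) := by
      have s3a : ∑ k ∈ Finset.Icc (2:ℤ) (2*n), ((k-1)^2 + (k+1-3*n)) % p
          = ∑ m ∈ Finset.Icc (0:ℤ) (2*n-2), (m^2 + 1) % p := by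
        refine Finset.sum_nbij' (fun k => 2*n - k) (fun m => 2*n - m) ?_ ?_ ?_ ?_ ?_
        · intro k hk; simp only [Finset.mem_Icc] at *; omega
        · intro m hm; simp only [Finset.mem_Icc] at *; omega
        · intro k _; ring
        · intro m _; ring
        · intro k _
          show ((k-1)^2 + (k+1-3*n)) % p = ((2*n-k)^2 + 1) % p
          rw [show (k-1)^2 + (k+1-3*n) = ((2*n-k)^2 + 1) + p * (k - n - 1) from by
            rw [hp]; ring, Int.add_mul_emod_self_left]
      have s3b : ∑ m ∈ Finset.Icc (0:ℤ) (2*n-2), (m^2+1) % p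
          = 1 + ∑ m ∈ Finset.Icc (1:ℤ) (2*n-2), (m^2+1) % p := by
        rw [show Finset.Icc (0:ℤ) (2*n-2) = insert 0 (Finset.Icc 1 (2*n-2)) from by
            ext x; simp only [Finset.mem_insert, Finset.mem_Icc]; omega,
          Finset.sum_insert (by simp)]
        congr 1
        rw [show (0:ℤ)^2+1 = 1 from by ring]
        exact Int.emod_eq_of_lt (by omega) (by omega)
      have s3c : ∑ m ∈ Finset.Icc (1:ℤ) (2*n-1), (m^2+1) % p
          = (∑ m ∈ Finset.Icc (1:ℤ) (2*n-2), (m^2+1) % p) + (n+1) := by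
        rw [show Finset.Icc (1:ℤ) (2*n-1) = insert (2*n-1) (Finset.Icc 1 (2*n-2)) from by
            ext x; simp only [Finset.mem_insert, Finset.mem_Icc]; omega,
          Finset.sum_insert (by simp [Finset.mem_Icc] <;> omega),
          show (2*n-1)^2 + 1 = (n+1) + p*(n-1) from by rw [hp]; ring,
          Int.add_mul_emod_self_left,
          show (n+1) % p = n+1 from Int.emod_eq_of_lt (by omega) (by omega)]
        ring
      linarith [s3a, s3b, s3c, hU]
    have hval : (((Finset.Icc 2 (2*n)).filter
          (fun k => p ≤ (k-1)^2 % p + (k+1-3*n) % p)).card : ℤ) * p = n * p := by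
      have : (((Finset.Icc 2 (2*n)).filter
          (fun k => p ≤ (k-1)^2 % p + (k+1-3*n) % p)).card : ℤ) * p = 4*n^2 - n := by
        linarith [key, h2S2, hS3]
      rw [this, hp]; ring
    exact mul_right_cancel₀ (by omega : p ≠ 0) hval
  · -- second half
    have e1 : {k : ℤ | 2*n+1 ≤ k ∧ k ≤ 4*n ∧ p ≤ (k-1)^2 % p + (k+1-3*n) % p}
        = ↑((Finset.Icc (2*n+1) (4*n)).filter (fun k => p ≤ (k-1)^2 % p + (k+1-3*n) % p)) := by
      ext k
      simp only [Set.mem_setOf_eq, Finset.coe_filter, Finset.mem_Icc]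
      tauto
    rw [e1, Set.ncard_coe_finset]
    have key : (((Finset.Icc (2*n+1) (4*n)).filter
          (fun k => p ≤ (k-1)^2 % p + (k+1-3*n) % p)).card : ℤ) * p
        = (∑ k ∈ Finset.Icc (2*n+1) (4*n), (k-1)^2 % p)
          + (∑ k ∈ Finset.Icc (2*n+1) (4*n), (k+1-3*n) % p)
          - ∑ k ∈ Finset.Icc (2*n+1) (4*n), ((k-1)^2 + (k+1-3*n)) % p := by
      rw [← Finset.sum_add_distrib, ← Finset.sum_sub_distrib,
        Finset.sum_congr rfl (fun k _ => (JumpsAux.carry hp0 ((k-1)^2) (k+1-3*n)).symm),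
        ← Finset.sum_filter, Finset.sum_const, nsmul_eq_mul]
    have hS1 : ∑ k ∈ Finset.Icc (2*n+1) (4*n), (k-1)^2 % p
        = ∑ k ∈ Finset.Icc (2:ℤ) (2*n), (k-1)^2 % p := by
      have e : ∑ k ∈ Finset.Icc (2*n+1) (4*n), (k-1)^2 % p
          = ∑ m ∈ Finset.Icc (1:ℤ) (2*n), (m-1)^2 % p := by
        refine Finset.sum_nbij' (fun k => 4*n+1-k) (fun m => 4*n+1-m) ?_ ?_ ?_ ?_ ?_
        · intro k hk; simp only [Finset.mem_Icc] at *; omega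
        · intro m hm; simp only [Finset.mem_Icc] at *; omega
        · intro k _; ring
        · intro m _; ring
        · intro k _
          show (k-1)^2 % p = ((4*n+1-k)-1)^2 % p
          rw [show (k-1)^2 = ((4*n+1-k)-1)^2 + p * (2*k-4*n-1) from by rw [hp]; ring,
            Int.add_mul_emod_self_left]
      rw [e, show Finset.Icc (1:ℤ) (2*n) = insert 1 (Finset.Icc 2 (2*n)) from by
          ext x; simp only [Finset.mem_insert, Finset.mem_Icc]; omega,
        Finset.sum_insert (by simp [Finset.mem_Icc] <;> omega)]
      norm_num
    have hS3 : ∑ k ∈ Finset.Icc (2*n+1) (4*n), ((k-1)^2 + (k+1-3*n)) % p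
        = (∑ k ∈ Finset.Icc (2:ℤ) (2*n), (k-1)^2 % p) + 3*n := by
      have s3a : ∑ k ∈ Finset.Icc (2*n+1) (4*n), ((k-1)^2 + (k+1-3*n)) % p
          = ∑ m ∈ Finset.Icc (1:ℤ) (2*n), (m^2+1) % p := by
        refine Finset.sum_nbij' (fun k => k - 2*n) (fun m => m + 2*n) ?_ ?_ ?_ ?_ ?_
        · intro k hk; simp only [Finset.mem_Icc] at *; omega
        · intro m hm; simp only [Finset.mem_Icc] at *; omega
        · intro k _; ring
        · intro m _; ring
        · intro k _
          show ((k-1)^2 + (k+1-3*n)) % p = ((k-2*n)^2 + 1) % p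
          rw [show (k-1)^2 + (k+1-3*n) = ((k-2*n)^2 + 1) + p * (k - n - 1) from by
            rw [hp]; ring, Int.add_mul_emod_self_left]
      have s3b : ∑ m ∈ Finset.Icc (1:ℤ) (2*n), (m^2+1) % p
          = (∑ m ∈ Finset.Icc (1:ℤ) (2*n-1), (m^2+1) % p) + (n+1) := by
        rw [show Finset.Icc (1:ℤ) (2*n) = insert (2*n) (Finset.Icc 1 (2*n-1)) from by
            ext x; simp only [Finset.mem_insert, Finset.mem_Icc]; omega,
          Finset.sum_insert (by simp [Finset.mem_Icc] <;> omega),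
          show (2*n)^2 + 1 = (n+1) + p*n from by rw [hp]; ring,
          Int.add_mul_emod_self_left,
          show (n+1) % p = n+1 from Int.emod_eq_of_lt (by omega) (by omega)]
        ring
      linarith [s3a, s3b, hU]
    have h2S2 : (∑ k ∈ Finset.Icc (2*n+1) (4*n), (k+1-3*n) % p) * 2
        = 8*n^2 - 12*n + 4 := by
      have hsplit : Finset.Icc (2*n+1) (4*n)
          = Finset.Icc (2*n+1) (3*n-2) ∪ Finset.Icc (3*n-1) (4*n) := by
        ext x; simp only [Finset.mem_union, Finset.mem_Icc]; omega
      have hdisj : Disjoint (Finset.Icc (2*n+1) (3*n-2)) (Finset.Icc (3*n-1) (4*n)) := by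
        rw [Finset.disjoint_left]
        intro x hx hx'
        simp only [Finset.mem_Icc] at *
        omega
      rw [hsplit, Finset.sum_union hdisj]
      have step1 : ∀ k ∈ Finset.Icc (2*n+1) (3*n-2), (k+1-3*n) % p = k + n := by
        intro k hk
        simp only [Finset.mem_Icc] at hk
        rw [show k+1-3*n = (k+n) + p * (-1) from by rw [hp]; ring,
          Int.add_mul_emod_self_left]
        exact Int.emod_eq_of_lt (by omega) (by omega)
      have step2 : ∀ k ∈ Finset.Icc (3*n-1) (4*n), (k+1-3*n) % p = k + (1-3*n) := by
        intro k hk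
        simp only [Finset.mem_Icc] at hk
        rw [show k+1-3*n = k+(1-3*n) from by ring]
        exact Int.emod_eq_of_lt (by omega) (by omega)
      rw [Finset.sum_congr rfl step1, Finset.sum_congr rfl step2,
        Finset.sum_add_distrib, Finset.sum_add_distrib, Finset.sum_const,
        Finset.sum_const, nsmul_eq_mul, nsmul_eq_mul,
        JumpsAux.cardIcc (2*n+1) (3*n-2) (by omega),
        JumpsAux.cardIcc (3*n-1) (4*n) (by omega)]
      have g1 := JumpsAux.gauss (2*n+1) (3*n-2) (by omega)
      have g2 := JumpsAux.gauss (3*n-1) (4*n) (by omega)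
      linear_combination g1 + g2
    have hval : (((Finset.Icc (2*n+1) (4*n)).filter
          (fun k => p ≤ (k-1)^2 % p + (k+1-3*n) % p)).card : ℤ) * p = (n-2) * p := by
      have : (((Finset.Icc (2*n+1) (4*n)).filter
          (fun k => p ≤ (k-1)^2 % p + (k+1-3*n) % p)).card : ℤ) * p = 4*n^2 - 9*n + 2 := by
        linarith [key, h2S2, hS1, hS3]
      rw [this, hp]; ring
    exact mul_right_cancel₀ (by omega : p ≠ 0) hval
end

section
/- Let p = 4n-1 be prime with n > 3. Then ∑_{k=1}^{p-1} r_p(k^2 - k + 2 - 3n) = ∑_{k=1}^{p-1} r_p(k^2) + 3n - 2. -/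
theorem sum_residues_full (n p : ℤ) (hn : 3 < n) (hp : p = 4 * n - 1)
    (hprime : Prime p) :
    ∑ k ∈ Finset.Icc (1 : ℤ) (p - 1), (k ^ 2 - k + 2 - 3 * n) % p =
      (∑ k ∈ Finset.Icc (1 : ℤ) (p - 1), k ^ 2 % p) + 3 * n - 2 := by
  have hp0 : 0 < p := by omega
  set q : ℕ := p.toNat with hqdef
  have hq : (q : ℤ) = p := Int.toNat_of_nonneg hp0.le
  have hqprime : Nat.Prime q := by
    have h1 := Int.prime_iff_natAbs_prime.mp hprime
    have h2 : p.natAbs = q := by omega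
    rwa [h2] at h1
  haveI : Fact (Nat.Prime q) := ⟨hqprime⟩
  have hq3 : q % 4 = 3 := by omega
  -- key: no j with j^2 ≡ -1 mod p
  have hkey : ∀ j : ℤ, j ^ 2 % p ≠ p - 1 := by
    intro j hj
    have hdvd : p ∣ j ^ 2 + 1 := by
      have h1 : (1 : ℤ) % p = 1 := Int.emod_eq_of_lt (by omega) (by omega)
      have h2 : p - 1 + 1 = p := by ring
      rw [Int.dvd_iff_emod_eq_zero, Int.add_emod, hj, h1, h2, Int.emod_self]
    rw [← hq] at hdvd
    have h0 : ((j ^ 2 + 1 : ℤ) : ZMod q) = 0 :=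
      (ZMod.intCast_zmod_eq_zero_iff_dvd _ _).mpr hdvd
    push_cast at h0
    have hsq : IsSquare (-1 : ZMod q) := ⟨(j : ZMod q), by ring_nf; linear_combination -h0⟩
    rw [ZMod.exists_sq_eq_neg_one_iff] at hsq
    exact hsq hq3
  -- termwise: (j^2+1) % p = j^2 % p + 1
  have hD : ∀ j : ℤ, (j ^ 2 + 1) % p = j ^ 2 % p + 1 := by
    intro j
    have h1 : 0 ≤ j ^ 2 % p := Int.emod_nonneg _ hp0.ne'
    have h2 : j ^ 2 % p < p := Int.emod_lt_of_pos _ hp0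
    have h3 := hkey j
    have : (j ^ 2 + 1) % p = (j ^ 2 % p + 1) % p := by
      conv_lhs => rw [Int.add_emod]
      simp [Int.emod_emod_of_dvd]
    rw [this, Int.emod_eq_of_lt (by omega) (by omega)]
  -- step A: termwise completion of square
  have hA : ∀ k : ℤ, (k ^ 2 - k + 2 - 3 * n) % p = ((k - 2 * n) ^ 2 + 1) % p := by
    intro k
    have h : k ^ 2 - k + 2 - 3 * n = ((k - 2 * n) ^ 2 + 1) + p * (k - n - 1) := by
      rw [hp]; ring
    rw [h, Int.add_mul_emod_self_left]
  rw [Finset.sum_congr rfl fun k _ => hA k]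
  -- extend to Icc 0 (p-1)
  have hins : Finset.Icc (0 : ℤ) (p - 1) = insert 0 (Finset.Icc 1 (p - 1)) := by
    ext x; simp [Finset.mem_Icc]; omega
  have h0mem : (0 : ℤ) ∉ Finset.Icc (1 : ℤ) (p - 1) := by simp
  -- bijection: sum over Icc 0 (p-1) of ((k-2n)^2+1)%p = sum of (j^2+1)%p
  have hB : ∑ k ∈ Finset.Icc (0 : ℤ) (p - 1), ((k - 2 * n) ^ 2 + 1) % p =
      ∑ j ∈ Finset.Icc (0 : ℤ) (p - 1), (j ^ 2 + 1) % p := by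
    apply Finset.sum_nbij' (fun k => (k - 2 * n) % p) (fun j => (j + 2 * n) % p)
    · intro a ha
      simp only [Finset.mem_Icc] at *
      constructor
      · exact Int.emod_nonneg _ hp0.ne'
      · have := Int.emod_lt_of_pos (a - 2 * n) hp0; omega
    · intro a ha
      simp only [Finset.mem_Icc] at *
      constructor
      · exact Int.emod_nonneg _ hp0.ne'
      · have := Int.emod_lt_of_pos (a + 2 * n) hp0; omega
    · intro a ha
      simp only [Finset.mem_Icc] at ha
      have : ((a - 2 * n) % p + 2 * n) % p = a % p := by
        conv_rhs => rw [show a = (a - 2 * n) + 2 * n by ring]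
        rw [Int.add_emod, Int.emod_emod_of_dvd _ dvd_rfl, ← Int.add_emod]
      rw [this, Int.emod_eq_of_lt (by omega) (by omega)]
    · intro a ha
      simp only [Finset.mem_Icc] at ha
      have : ((a + 2 * n) % p - 2 * n) % p = a % p := by
        conv_rhs => rw [show a = (a + 2 * n) - 2 * n by ring]
        rw [Int.sub_emod, Int.emod_emod_of_dvd _ dvd_rfl, ← Int.sub_emod]
      rw [this, Int.emod_eq_of_lt (by omega) (by omega)]
    · intro a _
      have hmm : ((a - 2 * n) % p) ^ 2 % p = (a - 2 * n) ^ 2 % p := by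
        rw [pow_two, pow_two, Int.mul_emod ((a - 2 * n) % p),
          Int.emod_emod_of_dvd _ dvd_rfl, ← Int.mul_emod]
      conv_rhs => rw [Int.add_emod, hmm, ← Int.add_emod]
  -- compute the k = 0 term of LHS extension: (4n^2+1) % p = n+1
  have hzero : ((0 - 2 * n) ^ 2 + 1) % p = n + 1 := by
    have h : (0 - 2 * n) ^ 2 + 1 = (n + 1) + p * n := by rw [hp]; ring
    rw [h, Int.add_mul_emod_self_left, Int.emod_eq_of_lt (by omega) (by omega)]
  have hL : ∑ k ∈ Finset.Icc (1 : ℤ) (p - 1), ((k - 2 * n) ^ 2 + 1) % p =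
      (∑ j ∈ Finset.Icc (0 : ℤ) (p - 1), (j ^ 2 + 1) % p) - (n + 1) := by
    rw [← hB, hins, Finset.sum_insert h0mem, hzero]; ring
  rw [hL]
  -- RHS side: (j^2+1)%p = j^2%p + 1, and card = p
  have hcard : (Finset.Icc (0 : ℤ) (p - 1)).card = p.toNat := by
    rw [Int.card_Icc]; omega
  have hR : ∑ j ∈ Finset.Icc (0 : ℤ) (p - 1), (j ^ 2 + 1) % p =
      (∑ j ∈ Finset.Icc (0 : ℤ) (p - 1), j ^ 2 % p) + p := by
    rw [Finset.sum_congr rfl fun j _ => hD j, Finset.sum_add_distrib,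
      Finset.sum_const, hcard, nsmul_eq_mul, hq, mul_one]
  rw [hR, hins, Finset.sum_insert h0mem]
  simp
  omega
end

section
/- Let p = 4n-1 be prime with n > 3. Then ∑_{k=1}^{2n} r_p(k^2 - k + 2 - 3n) = ∑_{k=1}^{2n} r_p(k^2) + n. -/
theorem sum_residues_half (n p : ℤ) (hn : 3 < n) (hp : p = 4 * n - 1)
    (hprime : Prime p) :
    ∑ k ∈ Finset.Icc (1 : ℤ) (2 * n), (k ^ 2 - k + 2 - 3 * n) % p =
      (∑ k ∈ Finset.Icc (1 : ℤ) (2 * n), k ^ 2 % p) + n := by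
  have hppos : 0 < p := by omega
  -- natural-number version of p
  set q : ℕ := p.toNat with hq
  have hqp : (q : ℤ) = p := Int.toNat_of_nonneg (by omega)
  have hqprime : q.Prime := by
    rw [Int.prime_iff_natAbs_prime] at hprime
    rwa [show p.natAbs = q by omega] at hprime
  haveI : Fact q.Prime := ⟨hqprime⟩
  -- -1 is not a square mod p
  have hsq : ∀ j : ℤ, j ^ 2 % p ≠ p - 1 := by
    intro j hj
    have hdvd : (q : ℤ) ∣ j ^ 2 + 1 := by
      refine ⟨j ^ 2 / p + 1, ?_⟩
      rw [hqp]
      linear_combination hj - Int.emod_add_mul_ediv (j ^ 2) p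
    have h0 : ((j : ZMod q) ^ 2 + 1 = 0) := by
      have := (ZMod.intCast_zmod_eq_zero_iff_dvd (j ^ 2 + 1) q).mpr hdvd
      push_cast at this
      exact this
    have hsqr : IsSquare (-1 : ZMod q) := ⟨(j : ZMod q), by linear_combination -h0⟩
    rw [ZMod.exists_sq_eq_neg_one_iff] at hsqr
    apply hsqr
    omega
  -- step up one: (j^2+1)%p = j^2%p + 1
  have h2 : ∀ j : ℤ, (j ^ 2 + 1) % p = j ^ 2 % p + 1 := by
    intro j
    have hb1 := Int.emod_nonneg (j ^ 2) (by omega : p ≠ 0)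
    have hb2 := Int.emod_lt_of_pos (j ^ 2) hppos
    have hb3 := hsq j
    rw [Int.add_emod, show (1 : ℤ) % p = 1 from Int.emod_eq_of_lt (by omega) (by omega),
      Int.emod_eq_of_lt (by omega) (by omega)]
  -- rewrite LHS termwise
  have h1 : ∀ k : ℤ, (k ^ 2 - k + 2 - 3 * n) % p = ((k + 2 * n - 1) ^ 2 + 1) % p := by
    intro k
    have : p ∣ ((k + 2 * n - 1) ^ 2 + 1) - (k ^ 2 - k + 2 - 3 * n) := ⟨k + n, by subst hp; ring⟩
    exact Int.modEq_iff_dvd.mpr this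
  rw [Finset.sum_congr rfl fun k _ => h1 k]
  -- reindex x = k + 2n - 1
  have hre : ∑ k ∈ Finset.Icc (1 : ℤ) (2 * n), ((k + 2 * n - 1) ^ 2 + 1) % p
      = ∑ x ∈ Finset.Icc (2 * n) (4 * n - 1), (x ^ 2 + 1) % p := by
    apply Finset.sum_nbij' (fun k => k + 2 * n - 1) (fun x => x - 2 * n + 1)
    · intros k hk; simp only [Finset.mem_Icc] at *; omega
    · intros x hx; simp only [Finset.mem_Icc] at *; omega
    · intros k hk; omega
    · intros x hx; omega
    · intros k hk; rfl
  rw [hre]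
  -- split off the top term x = 4n - 1 (which is p)
  have hsplit : Finset.Icc (2 * n) (4 * n - 1)
      = insert (4 * n - 1) (Finset.Icc (2 * n) (4 * n - 2)) := by
    ext x; simp only [Finset.mem_insert, Finset.mem_Icc]; omega
  rw [hsplit, Finset.sum_insert (by simp only [Finset.mem_Icc]; omega)]
  have htop : ((4 * n - 1) ^ 2 + 1) % p = 1 := by
    have : (4 * n - 1) ^ 2 + 1 = 1 + (4 * n - 1) * p := by subst hp; ring
    rw [this, Int.add_mul_emod_self_right]
    exact Int.emod_eq_of_lt (by omega) (by omega)
  rw [htop]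
  -- reflect x ↦ 4n - 1 - x
  have hrefl : ∑ x ∈ Finset.Icc (2 * n) (4 * n - 2), (x ^ 2 + 1) % p
      = ∑ j ∈ Finset.Icc (1 : ℤ) (2 * n - 1), (j ^ 2 + 1) % p := by
    apply Finset.sum_nbij' (fun x => 4 * n - 1 - x) (fun j => 4 * n - 1 - j)
    · intros x hx; simp only [Finset.mem_Icc] at *; omega
    · intros j hj; simp only [Finset.mem_Icc] at *; omega
    · intros x hx; omega
    · intros j hj; omega
    · intro x hx
      have : p ∣ ((4 * n - 1 - x) ^ 2 + 1) - (x ^ 2 + 1) := ⟨4 * n - 1 - 2 * x, by subst hp; ring⟩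
      exact Int.modEq_iff_dvd.mpr this
  rw [hrefl]
  -- apply h2 termwise and compute the constant sum
  rw [Finset.sum_congr rfl fun j _ => h2 j, Finset.sum_add_distrib, Finset.sum_const,
    Int.card_Icc]
  -- RHS: split off k = 2n
  have hsplit2 : Finset.Icc (1 : ℤ) (2 * n)
      = insert (2 * n) (Finset.Icc (1 : ℤ) (2 * n - 1)) := by
    ext x; simp only [Finset.mem_insert, Finset.mem_Icc]; omega
  rw [hsplit2, Finset.sum_insert (by simp only [Finset.mem_Icc]; omega)]
  have h2n : (2 * n) ^ 2 % p = n := by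
    have : (2 * n) ^ 2 = n + n * p := by subst hp; ring
    rw [this, Int.add_mul_emod_self_right]
    exact Int.emod_eq_of_lt (by omega) (by omega)
  rw [h2n]
  rw [nsmul_eq_mul, mul_one, show ((2 * n - 1 + 1 - 1).toNat : ℤ) = 2 * n - 1 by omega]
  ring
end

section
/- Let p = 4n-1 be prime with n > 3. Then ∑_{k=1}^{p-1} ⌊(k^2 - k + 2 - 3n)/p⌋ = (p(p-5) + 6 - n)/3 - (1/p)·∑_{k=1}^{p-1} r_p(k^2). -/
lemma icc_succ_top_int {a b : ℤ} (h : a ≤ b + 1) (f : ℤ → ℤ) :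
    ∑ k ∈ Finset.Icc a (b + 1), f k = (∑ k ∈ Finset.Icc a b, f k) + f (b + 1) := by
  have hins : Finset.Icc a (b + 1) = insert (b + 1) (Finset.Icc a b) := by
    ext x; simp only [Finset.mem_Icc, Finset.mem_insert]; omega
  have hnot : b + 1 ∉ Finset.Icc a b := by simp
  rw [hins, Finset.sum_insert hnot]; ring

lemma sum_poly_nat (c : ℤ) (M : ℕ) :
    6 * ∑ k ∈ Finset.Icc (1 : ℤ) (M : ℤ), (k ^ 2 - k + c)
      = 2 * (M : ℤ) * ((M : ℤ) + 1) * ((M : ℤ) - 1) + 6 * (M : ℤ) * c := by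
  induction M with
  | zero =>
    rw [show Finset.Icc (1:ℤ) ((0:ℕ):ℤ) = ∅ from Finset.Icc_eq_empty (by norm_num)]
    norm_num
  | succ M ih =>
    have hc : ((M + 1 : ℕ) : ℤ) = (M : ℤ) + 1 := by push_cast; ring
    rw [hc, icc_succ_top_int (by omega), mul_add, ih]
    ring

lemma sum_poly (c : ℤ) (m : ℤ) (hm : 0 ≤ m) :
    6 * ∑ k ∈ Finset.Icc (1 : ℤ) m, (k ^ 2 - k + c) = 2 * m * (m + 1) * (m - 1) + 6 * m * c := by
  have h : ((m.toNat : ℤ)) = m := Int.toNat_of_nonneg hm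
  have := sum_poly_nat c m.toNat
  rw [h] at this
  exact this

theorem sum_floors_full (n p : ℤ) (hn : 3 < n) (hp : p = 4 * n - 1)
    (hprime : Prime p) :
    ((∑ k ∈ Finset.Icc (1 : ℤ) (p - 1), (k ^ 2 - k + 2 - 3 * n) / p : ℤ) : ℚ) =
      ((p : ℚ) * (p - 5) + 6 - n) / 3 -
        (1 / (p : ℚ)) * ((∑ k ∈ Finset.Icc (1 : ℤ) (p - 1), k ^ 2 % p : ℤ) : ℚ) := by
  have hppos : (0 : ℤ) < p := by omega
  have hp1 : (1 : ℤ) < p := by omega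
  set S : ℤ := ∑ k ∈ Finset.Icc (1 : ℤ) (p - 1), k ^ 2 % p with hS
  set D : ℤ := ∑ k ∈ Finset.Icc (1 : ℤ) (p - 1), (k ^ 2 - k + 2 - 3 * n) / p with hD
  -- prime setup
  have hq' : (p.natAbs : ℤ) = p := Int.natAbs_of_nonneg hppos.le
  have hqprime : p.natAbs.Prime := Int.prime_iff_natAbs_prime.mp hprime
  haveI : Fact p.natAbs.Prime := ⟨hqprime⟩
  have hq4 : p.natAbs % 4 = 3 := by omega
  have hns : ¬ IsSquare (-1 : ZMod p.natAbs) := fun h =>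
    (ZMod.exists_sq_eq_neg_one_iff.mp h) hq4
  have hsq : ∀ x : ℤ, ¬ (p ∣ x ^ 2 + 1) := by
    intro x hdvd
    apply hns
    have h0 : ((x ^ 2 + 1 : ℤ) : ZMod p.natAbs) = 0 := by
      rw [ZMod.intCast_zmod_eq_zero_iff_dvd]
      rwa [hq']
    push_cast at h0
    exact ⟨(x : ZMod p.natAbs), by linear_combination -h0⟩
  have hmodlt : ∀ x : ℤ, x ^ 2 % p ≤ p - 2 := by
    intro x
    have h1 := Int.emod_nonneg (x ^ 2) (by omega : p ≠ 0)
    have h2 := Int.emod_lt_of_pos (x ^ 2) hppos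
    rcases eq_or_ne (x ^ 2 % p) (p - 1) with h | h
    · exfalso
      apply hsq x
      have hd := Int.dvd_self_sub_of_emod_eq h
      have he : x ^ 2 + 1 = (x ^ 2 - (p - 1)) + p := by ring
      rw [he]; exact dvd_add hd dvd_rfl
    · omega
  have stepB : ∀ x : ℤ, (x ^ 2 + 1) % p = x ^ 2 % p + 1 := by
    intro x
    have h1 := Int.emod_nonneg (x ^ 2) (by omega : p ≠ 0)
    have h3 := hmodlt x
    rw [Int.add_emod, Int.emod_eq_of_lt (by norm_num) hp1,
      Int.emod_eq_of_lt (by omega) (by omega)]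
  have stepA : ∀ k : ℤ, (k ^ 2 - k + 2 - 3 * n) % p = ((k - 2 * n) ^ 2 + 1) % p := by
    intro k
    have h : p ∣ ((k - 2 * n) ^ 2 + 1) - (k ^ 2 - k + 2 - 3 * n) := ⟨n + 1 - k, by rw [hp]; ring⟩
    exact Int.modEq_iff_dvd.mpr h
  -- reindexing
  have hre : ∑ k ∈ Finset.Icc (0 : ℤ) (p - 1), (k - 2 * n) ^ 2 % p
      = ∑ k ∈ Finset.Icc (0 : ℤ) (p - 1), k ^ 2 % p := by
    refine Finset.sum_nbij' (fun k => (k - 2 * n) % p) (fun k => (k + 2 * n) % p)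
      ?_ ?_ ?_ ?_ ?_
    · intro a ha
      simp only [Finset.mem_Icc]
      have := Int.emod_nonneg (a - 2 * n) (by omega : p ≠ 0)
      have := Int.emod_lt_of_pos (a - 2 * n) hppos
      omega
    · intro a ha
      simp only [Finset.mem_Icc]
      have := Int.emod_nonneg (a + 2 * n) (by omega : p ≠ 0)
      have := Int.emod_lt_of_pos (a + 2 * n) hppos
      omega
    · intro a ha
      simp only [Finset.mem_Icc] at ha
      show ((a - 2 * n) % p + 2 * n) % p = a
      rw [Int.emod_add_emod]
      have he : a - 2 * n + 2 * n = a := by ring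
      rw [he]
      exact Int.emod_eq_of_lt ha.1 (by omega)
    · intro a ha
      simp only [Finset.mem_Icc] at ha
      show ((a + 2 * n) % p - 2 * n) % p = a
      have h : (a + 2 * n) % p ≡ a + 2 * n [ZMOD p] := Int.emod_emod_of_dvd _ dvd_rfl
      have h2 := h.sub_right (2 * n)
      have he : a + 2 * n - 2 * n = a := by ring
      rw [he] at h2
      have h3 : ((a + 2 * n) % p - 2 * n) % p = a % p := h2
      rw [h3]
      exact Int.emod_eq_of_lt ha.1 (by omega)
    · intro a ha
      have h : (a - 2 * n) % p ≡ (a - 2 * n) [ZMOD p] := Int.emod_emod_of_dvd _ dvd_rfl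
      exact (h.pow 2).symm
    -- splitting off k = 0
  have hins : Finset.Icc (0 : ℤ) (p - 1) = insert 0 (Finset.Icc (1 : ℤ) (p - 1)) := by
    ext x; simp only [Finset.mem_Icc, Finset.mem_insert]; omega
  have h0not : (0 : ℤ) ∉ Finset.Icc (1 : ℤ) (p - 1) := by simp
  have hzero : (0 - 2 * n) ^ 2 % p = n := by
    have h : (0 - 2 * n) ^ 2 = n + p * n := by rw [hp]; ring
    rw [h, Int.add_mul_emod_self_left, Int.emod_eq_of_lt (by omega) (by omega)]
  have h1 : ∑ k ∈ Finset.Icc (0 : ℤ) (p - 1), (k - 2 * n) ^ 2 % p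
      = n + ∑ k ∈ Finset.Icc (1 : ℤ) (p - 1), (k - 2 * n) ^ 2 % p := by
    rw [hins, Finset.sum_insert h0not, hzero]
  have h2 : ∑ k ∈ Finset.Icc (0 : ℤ) (p - 1), k ^ 2 % p = S := by
    rw [hins, Finset.sum_insert h0not, hS]
    norm_num
  have hmid : ∑ k ∈ Finset.Icc (1 : ℤ) (p - 1), (k - 2 * n) ^ 2 % p = S - n := by omega
  -- sum of the remainders
  have hcard : ∑ k ∈ Finset.Icc (1 : ℤ) (p - 1), (1 : ℤ) = p - 1 := by
    rw [Finset.sum_const, Int.card_Icc, nsmul_eq_mul, mul_one]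
    omega
  have hM : (∑ k ∈ Finset.Icc (1 : ℤ) (p - 1), (k ^ 2 - k + 2 - 3 * n) % p) = S + p - 1 - n := by
    have e1 : (∑ k ∈ Finset.Icc (1 : ℤ) (p - 1), (k ^ 2 - k + 2 - 3 * n) % p)
        = ∑ k ∈ Finset.Icc (1 : ℤ) (p - 1), ((k - 2 * n) ^ 2 % p + 1) :=
      Finset.sum_congr rfl fun k _ => by rw [stepA, stepB]
    rw [e1, Finset.sum_add_distrib, hmid, hcard]
    ring
  -- relate division to subtraction
  have hpd : p * D = (∑ k ∈ Finset.Icc (1 : ℤ) (p - 1), (k ^ 2 - k + 2 - 3 * n))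
      - ∑ k ∈ Finset.Icc (1 : ℤ) (p - 1), (k ^ 2 - k + 2 - 3 * n) % p := by
    rw [hD, Finset.mul_sum, ← Finset.sum_sub_distrib]
    refine Finset.sum_congr rfl fun k _ => ?_
    linarith [Int.mul_ediv_add_emod (k ^ 2 - k + 2 - 3 * n) p]
  have hA : 6 * ∑ k ∈ Finset.Icc (1 : ℤ) (p - 1), (k ^ 2 - k + (2 - 3 * n))
      = 2 * (p - 1) * ((p - 1) + 1) * ((p - 1) - 1) + 6 * (p - 1) * (2 - 3 * n) :=
    sum_poly (2 - 3 * n) (p - 1) (by omega)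
  have hA' : 6 * ∑ k ∈ Finset.Icc (1 : ℤ) (p - 1), (k ^ 2 - k + 2 - 3 * n)
      = 2 * (p - 1) * p * (p - 2) + 6 * (p - 1) * (2 - 3 * n) := by
    have e : ∑ k ∈ Finset.Icc (1 : ℤ) (p - 1), (k ^ 2 - k + 2 - 3 * n)
        = ∑ k ∈ Finset.Icc (1 : ℤ) (p - 1), (k ^ 2 - k + (2 - 3 * n)) :=
      Finset.sum_congr rfl fun k _ => by ring
    rw [e, hA]; ring
  have key : 6 * (p * D) = 2 * p * (p * (p - 5) + 6 - n) - 6 * S := by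
    subst hp
    linear_combination 6 * hpd + hA' - 6 * hM
  -- pass to ℚ
  have hp0 : (p : ℚ) ≠ 0 := Int.cast_ne_zero.mpr (by omega)
  have keyQ : (6 : ℚ) * ((p : ℚ) * (D : ℚ))
      = 2 * (p : ℚ) * ((p : ℚ) * ((p : ℚ) - 5) + 6 - (n : ℚ)) - 6 * (S : ℚ) := by
    exact_mod_cast key
  field_simp
  linear_combination (1 / 2 : ℚ) * keyQ
end

section
/- Let p = 4n-1 be prime with n > 3, M = ⌊n^2/p⌋, and Q_m = (1 + sqrt(4mp + 3p - 4))/2. Then ∑_{k=1}^{n} ⌊(k^2 - k + 2 - 3n)/p⌋ = (M-1)·n - ∑_{m=0}^{M-1} ⌊Q_m⌋. -/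
/-- If `p ≡ 3 mod 4` is a positive prime, `p ∤ c`, then `p ∤ t² + c²`. -/
lemma aux_zmod (p : ℤ) (hp0 : 0 < p) (hp3 : p % 4 = 3) (hprime : Prime p)
    (t c : ℤ) (hc : ¬ p ∣ c) (h : p ∣ t ^ 2 + c ^ 2) : False := by
  set P : ℕ := p.toNat with hP
  have hPp : (P : ℤ) = p := Int.toNat_of_nonneg hp0.le
  have hPprime : P.Prime := by
    rw [Int.prime_iff_natAbs_prime] at hprime
    rwa [show P = p.natAbs by omega]
  haveI : Fact P.Prime := ⟨hPprime⟩
  have hP4 : P % 4 = 3 := by omega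
  have hcz : (c : ZMod P) ≠ 0 := by
    rw [Ne, ZMod.intCast_zmod_eq_zero_iff_dvd, hPp]
    exact hc
  have ht : (t : ZMod P) ^ 2 + (c : ZMod P) ^ 2 = 0 := by
    have : ((t ^ 2 + c ^ 2 : ℤ) : ZMod P) = 0 := by
      rw [ZMod.intCast_zmod_eq_zero_iff_dvd, hPp]
      exact h
    push_cast at this
    exact this
  have hsq : IsSquare (-1 : ZMod P) := by
    refine ⟨(t : ZMod P) * (c : ZMod P)⁻¹, ?_⟩
    field_simp
    linear_combination -ht
  rw [ZMod.exists_sq_eq_neg_one_iff] at hsq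
  exact hsq hP4

/-- `4*m*p + 3*p - 4` is never a perfect square when `p = 4n-1` is prime. -/
lemma aux_not_square (n p m t : ℤ) (hn : 3 < n) (hp : p = 4 * n - 1)
    (hprime : Prime p) : t ^ 2 ≠ 4 * m * p + 3 * p - 4 := by
  intro h
  have hp0 : (0:ℤ) < p := by omega
  refine aux_zmod p hp0 (by omega) hprime t 2 ?_ ⟨4 * m + 3, by linarith⟩
  intro hdvd
  have := Int.le_of_dvd (by norm_num) hdvd
  omega

/-- Characterization of the floor `q = ⌊(1+√D)/2⌋` for positive integer `D`. -/
lemma aux_floor_q (D q : ℤ) (hD : 0 < D)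
    (hq : q = ⌊(1 + Real.sqrt ((D : ℤ) : ℝ)) / 2⌋) :
    0 ≤ q ∧ (2*q-1)^2 ≤ D ∧ D < (2*q+1)^2 := by
  have hD1 : (1:ℤ) ≤ D := hD
  have hDR : (0:ℝ) ≤ (D:ℝ) := by exact_mod_cast hD.le
  have hs0 : 0 ≤ Real.sqrt (D:ℝ) := Real.sqrt_nonneg _
  have hsq : Real.sqrt (D:ℝ) ^ 2 = (D:ℝ) := Real.sq_sqrt hDR
  have hs1 : 1 ≤ Real.sqrt (D:ℝ) := by
    refine (Real.le_sqrt (by norm_num) hDR).mpr ?_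
    norm_num
    exact_mod_cast hD
  have hq0 : 0 ≤ q := by
    rw [hq]
    refine Int.le_floor.mpr ?_
    push_cast
    positivity
  have hle : (q:ℝ) ≤ (1 + Real.sqrt (D:ℝ)) / 2 := by rw [hq]; exact Int.floor_le _
  have hlt : (1 + Real.sqrt (D:ℝ)) / 2 < q + 1 := by rw [hq]; exact Int.lt_floor_add_one _
  have hqR : (0:ℝ) ≤ (q:ℝ) := by exact_mod_cast hq0
  refine ⟨hq0, ?_, ?_⟩
  · have : ((2*q-1:ℤ):ℝ)^2 ≤ (D:ℝ) := by
      push_cast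
      nlinarith [hle, hs1, hsq, hqR]
    exact_mod_cast this
  · have : (D:ℝ) < ((2*q+1:ℤ):ℝ)^2 := by
      push_cast
      nlinarith [hlt, hs0, hsq, hqR]
    exact_mod_cast this

theorem sum_floors_n (n p M : ℤ) (hn : 3 < n) (hp : p = 4 * n - 1)
    (hprime : Prime p) (hM : M = n ^ 2 / p) :
    ∑ k ∈ Finset.Icc (1 : ℤ) n, (k ^ 2 - k + 2 - 3 * n) / p =
      (M - 1) * n -
        ∑ m ∈ Finset.Icc (0 : ℤ) (M - 1),
          ⌊(1 + Real.sqrt ((4 * m * p + 3 * p - 4 : ℤ) : ℝ)) / 2⌋ := by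
  have hp0 : (0:ℤ) < p := by omega
  have hdm := Int.mul_ediv_add_emod (n^2) p
  have hmod0 : 0 ≤ n^2 % p := Int.emod_nonneg _ (ne_of_gt hp0)
  have hmodp : n^2 % p < p := Int.emod_lt_of_pos _ hp0
  -- n² ≢ -1 (mod p) since -1 is a non-residue mod p
  have hr : n^2 % p ≠ p - 1 := by
    intro h
    refine aux_zmod p hp0 (by omega) hprime n 1 hprime.not_dvd_one ⟨n^2/p + 1, ?_⟩
    have : p * (n^2/p) + (p - 1) = n^2 := by rw [← h]; exact hdm
    ring_nf
    linarith
  have hr2 : n^2 % p < p - 1 := lt_of_le_of_ne (by linarith) hr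
  have hpM_le : p * M ≤ n^2 := by rw [hM]; linarith
  have hpM_ge : n^2 - p + 1 < p * M := by rw [hM]; linarith
  have hM1 : 1 ≤ M := by
    rw [hM, Int.le_ediv_iff_mul_le hp0]
    linarith [mul_nonneg (by omega : (0:ℤ) ≤ n - 4) (by omega : (0:ℤ) ≤ n)]
  -- Step 1: per-k expansion of the floor division
  have step1 : ∀ k ∈ Finset.Icc (1:ℤ) n,
      (k ^ 2 - k + 2 - 3 * n) / p
        = (∑ m ∈ Finset.Icc (0:ℤ) (M-1),
            if p * m ≤ k ^ 2 - k + 2 - 3 * n then (1:ℤ) else 0) - 1 := by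
    intro k hk
    simp only [Finset.mem_Icc] at hk
    set x := k ^ 2 - k + 2 - 3 * n with hx
    have hk1 : (0:ℤ) ≤ k - 1 := by linarith [hk.1]
    have hk2 : (0:ℤ) ≤ k := by linarith [hk.1]
    have hk3 : (0:ℤ) ≤ n - k := by linarith [hk.2]
    have hk4 : (0:ℤ) ≤ n + k - 1 := by linarith [hk.1]
    have hx1 : -p ≤ x := by linarith [mul_nonneg hk1 hk2]
    have hx2 : x < p * M := by linarith [mul_nonneg hk3 hk4, hpM_ge]
    have hf1 : -1 ≤ x / p := by
      rw [Int.le_ediv_iff_mul_le hp0]; linarith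
    have hf2 : x / p ≤ M - 1 := by
      have : x / p < M := by rw [Int.ediv_lt_iff_lt_mul hp0]; linarith
      omega
    have hcong : (∑ m ∈ Finset.Icc (0:ℤ) (M-1), if p * m ≤ x then (1:ℤ) else 0)
        = ∑ m ∈ Finset.Icc (0:ℤ) (M-1), if m ≤ x / p then (1:ℤ) else 0 := by
      refine Finset.sum_congr rfl fun m _ => ?_
      have hiff : p * m ≤ x ↔ m ≤ x / p := by
        rw [Int.le_ediv_iff_mul_le hp0, mul_comm]
      exact if_congr hiff rfl rfl
    rw [hcong, ← Finset.sum_filter]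
    have hfil : Finset.filter (fun m => m ≤ x / p) (Finset.Icc (0:ℤ) (M-1))
        = Finset.Icc (0:ℤ) (x / p) := by
      ext m
      simp only [Finset.mem_filter, Finset.mem_Icc]
      omega
    rw [hfil]
    simp only [Finset.sum_const, nsmul_eq_mul, mul_one, Int.card_Icc]
    have key : ∀ f : ℤ, -1 ≤ f → f = ((f + 1 - 0).toNat : ℤ) - 1 := by
      intro f h; omega
    exact key _ hf1
  rw [Finset.sum_congr rfl step1, Finset.sum_sub_distrib, Finset.sum_comm]
  -- Step 3: per-m count via the floor of Q_m
  have step3 : ∀ m ∈ Finset.Icc (0:ℤ) (M-1),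
      (∑ k ∈ Finset.Icc (1:ℤ) n,
          if p * m ≤ k ^ 2 - k + 2 - 3 * n then (1:ℤ) else 0)
        = n - ⌊(1 + Real.sqrt ((4 * m * p + 3 * p - 4 : ℤ) : ℝ)) / 2⌋ := by
    intro m hm
    simp only [Finset.mem_Icc] at hm
    set q := ⌊(1 + Real.sqrt ((4 * m * p + 3 * p - 4 : ℤ) : ℝ)) / 2⌋ with hq
    have hmp0 : 0 ≤ m * p := mul_nonneg hm.1 hp0.le
    have hD : 0 < 4 * m * p + 3 * p - 4 := by linarith [hmp0]
    obtain ⟨hq0, hq1, hq2⟩ := aux_floor_q (4 * m * p + 3 * p - 4) q hD hq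
    clear_value q
    clear hq
    have hns := aux_not_square n p m (2*q-1) hn hp hprime
    have hq1' : (2*q-1)^2 < 4 * m * p + 3 * p - 4 := lt_of_le_of_ne hq1 hns
    have hC1 : q^2 - q < p * m + 3 * n - 2 := by linarith [hq1']
    have hC2 : p * m + 3 * n - 2 ≤ q^2 + q := by linarith [hq2]
    have hmle : p * m ≤ n^2 - p := by
      have h0 : (0:ℤ) ≤ M - 1 - m := by omega
      linarith [mul_nonneg hp0.le h0, hpM_le]
    have hqn : q ≤ n := by
      by_contra hcon
      push_neg at hcon
      have h1 : (0:ℤ) ≤ q - n - 1 := by omega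
      have h2 : (0:ℤ) ≤ q + n := by omega
      linarith [mul_nonneg h1 h2, hq1, hmle]
    rw [← Finset.sum_filter]
    have hfil : Finset.filter (fun k => p * m ≤ k ^ 2 - k + 2 - 3 * n)
        (Finset.Icc (1:ℤ) n) = Finset.Icc (q+1) n := by
      ext k
      simp only [Finset.mem_filter, Finset.mem_Icc]
      constructor
      · rintro ⟨⟨hk1, hk2⟩, hk3⟩
        refine ⟨?_, hk2⟩
        by_contra hcon
        push_neg at hcon
        have h1 : (0:ℤ) ≤ q - k := by omega
        have h2 : (0:ℤ) ≤ q + k - 1 := by omega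
        linarith [mul_nonneg h1 h2]
      · rintro ⟨hk1, hk2⟩
        have hk0 : 1 ≤ k := by omega
        refine ⟨⟨hk0, hk2⟩, ?_⟩
        have h1 : (0:ℤ) ≤ k - q - 1 := by omega
        have h2 : (0:ℤ) ≤ k + q := by omega
        linarith [mul_nonneg h1 h2]
    rw [hfil]
    simp only [Finset.sum_const, nsmul_eq_mul, mul_one, Int.card_Icc]
    have key : ∀ a b : ℤ, 0 ≤ b → b ≤ a → ((a + 1 - (b+1)).toNat : ℤ) = a - b := by
      intro a b h1 h2; omega
    rw [key n q hq0 hqn]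
  rw [Finset.sum_congr rfl step3, Finset.sum_sub_distrib]
  simp only [Finset.sum_const, nsmul_eq_mul, mul_one, Int.card_Icc]
  have h1 : ((n + 1 - 1).toNat : ℤ) = n := by omega
  have h2 : ((M - 1 + 1 - 0).toNat : ℤ) = M := by omega
  rw [h1, h2]
  ring
end

section
/- Let p = 4n-1 be prime with n > 3, M = ⌊n^2/p⌋, R_m = sqrt(mp), Q_m = (1 + sqrt(4mp + 3p - 4))/2, and let J_n = |{k ∈ ℤ : 2 ≤ k ≤ n+2 and r_p((k-1)^2) + r_p(k+1-3n) ≥ p}|. Then ∑_{m=1}^{M} ⌊R_m⌋ - ∑_{m=0}^{M-1} ⌊Q_m⌋ = J_n - M - 1. -/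
open Finset

private lemma jfi_div_eq_zero {a p : ℤ} (h0 : 0 ≤ a) (h1 : a < p) : a / p = 0 :=
  Int.ediv_eq_zero_of_lt h0 h1

private lemma jfi_ediv_eq {x q s p : ℤ} (hp : 0 < p) (hx : x = q * p + s)
    (h0 : 0 ≤ s) (h1 : s < p) : x / p = q := by
  rw [show x = s + q * p by omega, Int.add_mul_ediv_right _ _ (by omega : p ≠ 0),
    jfi_div_eq_zero h0 h1]
  ring

private lemma jfi_sum_ind_Icc {L U lo hi : ℤ} (h1 : L ≤ lo) (h2 : hi ≤ U) (h3 : lo - 1 ≤ hi) :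
    (∑ m ∈ Icc L U, if lo ≤ m ∧ m ≤ hi then (1:ℤ) else 0) = hi - lo + 1 := by
  rw [Finset.sum_boole]
  have h : (Icc L U).filter (fun m => lo ≤ m ∧ m ≤ hi) = Icc lo hi := by
    ext x; simp only [mem_filter, mem_Icc]; omega
  rw [h, Int.card_Icc, Int.toNat_of_nonneg (by omega : (0:ℤ) ≤ hi + 1 - lo)]
  ring

private lemma jfi_indicator_emod (x c p : ℤ) (hp : 0 < p) (hc0 : 0 ≤ c) (hcp : c ≤ p) :
    (if c ≤ x % p then (1:ℤ) else 0) = (x - c)/p - x/p + 1 := by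
  have h := Int.mul_ediv_add_emod x p
  have hr0 : 0 ≤ x % p := Int.emod_nonneg x (by omega)
  have hrp : x % p < p := Int.emod_lt_of_pos x hp
  have hx : x - c = (x % p - c) + (x / p) * p := by linarith
  rw [hx, Int.add_mul_ediv_right _ _ (by omega : p ≠ 0)]
  by_cases hcase : c ≤ x % p
  · rw [if_pos hcase, jfi_div_eq_zero (by omega) (by omega)]; ring
  · rw [if_neg hcase]
    have hm1 : (x % p - c) / p = -1 := by
      have h5 : (x % p - c + 1 * p) / p = (x % p - c) / p + 1 :=
        Int.add_mul_ediv_right _ _ (by omega : p ≠ 0)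
      have hz : (x % p - c + 1 * p) / p = 0 := jfi_div_eq_zero (by omega) (by omega)
      omega
    omega

private lemma jfi_ediv_sub_one {x p : ℤ} (hp : 0 < p) (h : ¬ p ∣ x) : (x - 1)/p = x/p := by
  have h1 : x % p ≠ 0 := fun hh => h (Int.dvd_of_emod_eq_zero hh)
  have h2 : 0 ≤ x % p := Int.emod_nonneg x (by omega)
  have h3 : x % p < p := Int.emod_lt_of_pos x hp
  have h4 := Int.mul_ediv_add_emod x p
  have hx : x - 1 = (x % p - 1) + (x / p) * p := by linarith
  rw [hx, Int.add_mul_ediv_right _ _ (by omega : p ≠ 0),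
    jfi_div_eq_zero (by omega) (by omega)]
  ring

private lemma jfi_isqrt_exists (x : ℤ) (hx : 0 ≤ x) :
    ∃ s : ℤ, 0 ≤ s ∧ s^2 ≤ x ∧ x < (s+1)^2 := by
  refine ⟨(Nat.sqrt x.toNat : ℤ), by positivity, ?_, ?_⟩
  · have h := Nat.sqrt_le' x.toNat
    have h2 : ((Nat.sqrt x.toNat : ℤ))^2 ≤ (x.toNat : ℤ) := by exact_mod_cast h
    rwa [Int.toNat_of_nonneg hx] at h2
  · have h := Nat.lt_succ_sqrt' x.toNat
    have h2 : (x.toNat : ℤ) < ((Nat.sqrt x.toNat : ℤ) + 1)^2 := by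
      rw [Nat.succ_eq_add_one] at h; exact_mod_cast h
    rwa [Int.toNat_of_nonneg hx] at h2

private lemma jfi_floor_sqrt_count (x K : ℤ) (hx : 0 ≤ x) (hxK : x < K^2) (hK : 1 ≤ K) :
    ⌊Real.sqrt ((x:ℤ):ℝ)⌋ = ∑ j ∈ Icc (1:ℤ) (K-1), if j^2 ≤ x then (1:ℤ) else 0 := by
  obtain ⟨s, hs0, hs1, hs2⟩ := jfi_isqrt_exists x hx
  have hfl : ⌊Real.sqrt ((x:ℤ):ℝ)⌋ = s := by
    rw [Int.floor_eq_iff]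
    constructor
    · rw [show ((s:ℝ)) = Real.sqrt (((s:ℝ))^2) from (Real.sqrt_sq (by exact_mod_cast hs0)).symm]
      apply Real.sqrt_le_sqrt; exact_mod_cast hs1
    · have hlt : Real.sqrt ((x:ℤ):ℝ) < ((s:ℝ) + 1) := by
        apply (Real.sqrt_lt' (by exact_mod_cast (by omega : (0:ℤ) < s + 1) : (0:ℝ) < (s:ℝ)+1)).mpr
        exact_mod_cast hs2
      push_cast at hlt ⊢; linarith
  have hsK : s ≤ K - 1 := by
    by_contra hcc; push_neg at hcc
    nlinarith
  have hcong : ∀ j ∈ Icc (1:ℤ) (K-1),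
      (if j^2 ≤ x then (1:ℤ) else 0) = (if 1 ≤ j ∧ j ≤ s then (1:ℤ) else 0) := by
    intro j hj; simp only [mem_Icc] at hj
    have hiff : (j^2 ≤ x) ↔ (1 ≤ j ∧ j ≤ s) := by
      constructor
      · intro h; refine ⟨hj.1, ?_⟩; by_contra hcc; push_neg at hcc; nlinarith
      · rintro ⟨h1, h2⟩; nlinarith
    simp only [hiff]
  rw [hfl, Finset.sum_congr rfl hcong, jfi_sum_ind_Icc le_rfl hsK (by omega)]
  ring

private lemma jfi_floor_q_count (E K : ℤ) (hE : 0 ≤ E) (hEK : E < K^2 + K) (hK : 1 ≤ K) :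
    ⌊(1 + Real.sqrt (((4*E + 1 : ℤ)):ℝ))/2⌋ = ∑ j ∈ Icc (1:ℤ) K, if j^2 - j ≤ E then (1:ℤ) else 0 := by
  obtain ⟨s, hs0, hs1, hs2⟩ := jfi_isqrt_exists E hE
  obtain ⟨q, hq1, hq2, hq3⟩ : ∃ q : ℤ, 1 ≤ q ∧ q^2 - q ≤ E ∧ E < q^2 + q := by
    rcases lt_or_ge E (s^2 + s) with hc | hc
    · exact ⟨s, by nlinarith, by nlinarith, hc⟩
    · exact ⟨s+1, by omega, by nlinarith, by nlinarith⟩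
  have hfl : ⌊(1 + Real.sqrt (((4*E + 1 : ℤ)):ℝ))/2⌋ = q := by
    rw [Int.floor_eq_iff]
    constructor
    · have h1 : ((2*q-1 : ℤ):ℝ) ≤ Real.sqrt (((4*E+1 : ℤ)):ℝ) := by
        rw [show (((2*q-1:ℤ)):ℝ) = Real.sqrt ((((2*q-1:ℤ)):ℝ)^2) from
          (Real.sqrt_sq (by exact_mod_cast (by omega : (0:ℤ) ≤ 2*q-1))).symm]
        apply Real.sqrt_le_sqrt
        have h2 : ((2*q-1)^2 : ℤ) ≤ 4*E+1 := by nlinarith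
        exact_mod_cast h2
      push_cast at h1 ⊢; linarith
    · have h2 : Real.sqrt (((4*E+1:ℤ)):ℝ) < ((2*q+1 : ℤ):ℝ) := by
        apply (Real.sqrt_lt' (by exact_mod_cast (by omega : (0:ℤ) < 2*q+1))).mpr
        have h3 : (4*E+1 : ℤ) < (2*q+1)^2 := by nlinarith
        exact_mod_cast h3
      push_cast at h2 ⊢; linarith
  have hqK : q ≤ K := by
    by_contra hcc; push_neg at hcc
    nlinarith
  have hcong : ∀ j ∈ Icc (1:ℤ) K,
      (if j^2 - j ≤ E then (1:ℤ) else 0) = (if 1 ≤ j ∧ j ≤ q then (1:ℤ) else 0) := by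
    intro j hj; simp only [mem_Icc] at hj
    have hiff : (j^2 - j ≤ E) ↔ (1 ≤ j ∧ j ≤ q) := by
      constructor
      · intro h; refine ⟨hj.1, ?_⟩; by_contra hcc; push_neg at hcc; nlinarith
      · rintro ⟨h1, h2⟩; nlinarith
    simp only [hiff]
  rw [hfl, Finset.sum_congr rfl hcong, jfi_sum_ind_Icc le_rfl hqK (by omega)]
  ring

private lemma jfi_sum_split_top (f : ℤ → ℤ) (a b : ℤ) (hab : a ≤ b + 1) :
    ∑ j ∈ Icc a (b+1), f j = (∑ j ∈ Icc a b, f j) + f (b+1) := by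
  have h1 : Icc a (b+1) = insert (b+1) (Icc a b) := by
    ext x; simp only [mem_Icc, mem_insert]; omega
  rw [h1, Finset.sum_insert (by simp only [mem_Icc]; omega)]
  ring

private lemma jfi_tele (f : ℤ → ℤ) (a : ℤ) : ∀ b : ℤ, a - 1 ≤ b →
    ∑ j ∈ Icc a b, (f (j+1) - f j) = f (b+1) - f a := by
  refine Int.le_induction ?_ ?_
  · rw [Finset.Icc_eq_empty (by omega), Finset.sum_empty,
      show a - 1 + 1 = a by ring, sub_self]
  · intro b hb ih
    rw [jfi_sum_split_top _ _ _ (by omega), ih]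
    ring

private lemma jfi_shift (F : ℤ → ℤ) (a b : ℤ) :
    ∑ m ∈ Icc a b, F m = ∑ m ∈ Icc (a+1) (b+1), F (m-1) := by
  rw [← Finset.map_add_right_Icc a b 1, Finset.sum_map]
  apply Finset.sum_congr rfl
  intro m _
  simp [addRightEmbedding]

private lemma jfi_dvd_transfer {p a q D : ℤ} (h : p ∣ a) (heq : 16*a = p*q + D) : p ∣ D := by
  have h2 : p ∣ 16*a - p*q := dvd_sub (h.mul_left 16) (dvd_mul_right p q)
  rwa [show 16*a - p*q = D by linarith] at h2

private lemma jfi_not_dvd_sq_add (n p : ℤ) (hn : 3 < n) (hp : p = 4*n-1) (hprime : Prime p)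
    (j : ℤ) : ¬ p ∣ (j^2 + j + n + 1) := by
  intro hdvd
  have hp0 : (0:ℤ) < p := by omega
  set P : ℕ := p.natAbs with hPdef
  have hPp : P.Prime := Int.prime_iff_natAbs_prime.mp hprime
  haveI : Fact P.Prime := ⟨hPp⟩
  have hPZ : (P : ℤ) = p := Int.natAbs_of_nonneg hp0.le
  have hP4 : P % 4 = 3 := by omega
  have h4 : p ∣ (2*j+1)^2 + 4 := by
    have he : (2*j+1)^2 + 4 = 4*(j^2+j+n+1) - p := by rw [hp]; ring
    rw [he]; exact dvd_sub (hdvd.mul_left 4) dvd_rfl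
  have hz : (((2*j+1)^2 + 4 : ℤ) : ZMod P) = 0 := by
    rw [ZMod.intCast_zmod_eq_zero_iff_dvd, hPZ]; exact h4
  have hx : ((2*j+1 : ℤ) : ZMod P)^2 = -4 := by
    push_cast at hz ⊢; linear_combination hz
  have h2ne : (2 : ZMod P) ≠ 0 := by
    intro h
    have hd : P ∣ 2 := by
      have h2 : ((2:ℕ) : ZMod P) = 0 := by exact_mod_cast h
      exact (ZMod.natCast_eq_zero_iff 2 P).mp h2
    have : P ≤ 2 := Nat.le_of_dvd (by norm_num) hd
    omega
  have hsq : IsSquare (-1 : ZMod P) := by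
    refine ⟨((2*j+1 : ℤ) : ZMod P) * (2:ZMod P)⁻¹, ?_⟩
    have h22 : (2:ZMod P) * (2:ZMod P)⁻¹ = 1 := mul_inv_cancel₀ h2ne
    have hcalc : ((2*j+1 : ℤ) : ZMod P) * (2:ZMod P)⁻¹ * (((2*j+1 : ℤ) : ZMod P) * (2:ZMod P)⁻¹)
        = -(((2:ZMod P) * (2:ZMod P)⁻¹) * ((2:ZMod P) * (2:ZMod P)⁻¹)) := by
      have : ((2*j+1 : ℤ) : ZMod P) * (2:ZMod P)⁻¹ * (((2*j+1 : ℤ) : ZMod P) * (2:ZMod P)⁻¹)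
          = ((2*j+1 : ℤ) : ZMod P)^2 * ((2:ZMod P)⁻¹ * (2:ZMod P)⁻¹) := by ring
      rw [this, hx]; ring
    rw [hcalc, h22]; norm_num
  rw [ZMod.exists_sq_eq_neg_one_iff] at hsq
  exact hsq hP4

private lemma jfi_shift' (F : ℤ → ℤ) (a b : ℤ) :
    ∑ m ∈ Icc (a+1) (b+1), F m = ∑ m ∈ Icc a b, F (m+1) := by
  rw [← Finset.map_add_right_Icc a b 1, Finset.sum_map]
  apply Finset.sum_congr rfl
  intro m _
  simp [addRightEmbedding]

theorem jumps_floor_identity (n p M : ℤ) (hn : 3 < n) (hp : p = 4 * n - 1)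
    (hprime : Prime p) (hM : M = n ^ 2 / p) :
    (∑ m ∈ Finset.Icc (1 : ℤ) M, ⌊Real.sqrt ((m * p : ℤ) : ℝ)⌋) -
        ∑ m ∈ Finset.Icc (0 : ℤ) (M - 1),
          ⌊(1 + Real.sqrt ((4 * m * p + 3 * p - 4 : ℤ) : ℝ)) / 2⌋ =
      (({k : ℤ | 2 ≤ k ∧ k ≤ n + 2 ∧
          p ≤ (k - 1) ^ 2 % p + (k + 1 - 3 * n) % p}.ncard : ℤ)) - M - 1 := by
  have hp0 : (0:ℤ) < p := by omega
  have hpne : p ≠ 0 := by omega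
  have hndvd : ∀ j : ℤ, 1 ≤ j → j < p → ¬ p ∣ j^2 := by
    intro j h1 h2 hdvd
    have hdj : p ∣ j := hprime.dvd_of_dvd_pow (n := 2) hdvd
    have := Int.le_of_dvd (by omega) hdj
    omega
  have hn2 : ¬ p ∣ n^2 := hndvd n (by omega) (by omega)
  have hMp : M * p ≤ n^2 := by rw [hM]; exact Int.ediv_mul_le _ hpne
  have hM1 : 1 ≤ M := by
    rw [hM, Int.le_ediv_iff_mul_le hp0]; nlinarith
  have hMr := Int.mul_ediv_add_emod (n^2) p
  rw [← hM] at hMr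
  set r : ℤ := n^2 % p with hrdef
  have hr0 : 0 ≤ r := Int.emod_nonneg _ hpne
  have hrp : r < p := Int.emod_lt_of_pos _ hp0
  have hsub : ∀ c : ℤ, r = c → p ∣ n^2 - c := by
    intro c hc
    exact ⟨M, by linarith⟩
  have h25 : ¬ p ∣ (n^2 - 2*n + 2) := by
    intro h
    have hD : p ∣ 25 := jfi_dvd_transfer h (show 16*(n^2-2*n+2) = p*(p-6) + 25 by rw [hp]; ring)
    have hle : p ≤ 25 := Int.le_of_dvd (by norm_num) hD
    have hge : 15 ≤ p := by omega
    interval_cases p <;> omega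
  have h17 : ¬ p ∣ (n^2 + 1) := by
    intro h
    have hD : p ∣ 17 := jfi_dvd_transfer h (show 16*(n^2+1) = p*(p+2) + 17 by rw [hp]; ring)
    have hle : p ≤ 17 := Int.le_of_dvd (by norm_num) hD
    have hge : 15 ≤ p := by omega
    interval_cases p <;> omega
  have h33 : ¬ p ∣ (n^2 + 2) := by
    intro h
    have hD : p ∣ 33 := jfi_dvd_transfer h (show 16*(n^2+2) = p*(p+2) + 33 by rw [hp]; ring)
    have hle : p ≤ 33 := Int.le_of_dvd (by norm_num) hD
    have hge : 15 ≤ p := by omega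
    interval_cases p <;> omega
  have h49 : ¬ p ∣ (n^2 + 3) := by
    intro h
    have hD : p ∣ 49 := jfi_dvd_transfer h (show 16*(n^2+3) = p*(p+2) + 49 by rw [hp]; ring)
    have hle : p ≤ 49 := Int.le_of_dvd (by norm_num) hD
    have hge : 15 ≤ p := by omega
    interval_cases p <;> omega
  have hrne : r ≠ 2*n - 2 := by
    intro h
    apply h25
    have h1 := hsub _ h
    rwa [show n^2 - (2*n-2) = n^2-2*n+2 by ring] at h1
  have hrne1 : r ≠ p - 1 := by
    intro h
    apply h17
    have h1 := hsub _ h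
    have h2 : p ∣ n^2 - (p-1) + p := dvd_add h1 dvd_rfl
    rwa [show n^2 - (p-1) + p = n^2 + 1 by ring] at h2
  have hrne2 : r ≠ p - 2 := by
    intro h
    apply h33
    have h1 := hsub _ h
    have h2 : p ∣ n^2 - (p-2) + p := dvd_add h1 dvd_rfl
    rwa [show n^2 - (p-2) + p = n^2 + 2 by ring] at h2
  have hrne3 : r ≠ p - 3 := by
    intro h
    apply h49
    have h1 := hsub _ h
    have h2 : p ∣ n^2 - (p-3) + p := dvd_add h1 dvd_rfl
    rwa [show n^2 - (p-3) + p = n^2 + 3 by ring] at h2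
  have hrtop : r ≤ p - 4 := by omega
  -- Step 1: floor of sqrt as counts
  have hA : ∀ m ∈ Icc (1:ℤ) M, ⌊Real.sqrt ((m * p : ℤ) : ℝ)⌋
      = ∑ j ∈ Icc (1:ℤ) (n-1), if j^2 ≤ m*p then (1:ℤ) else 0 := by
    intro m hm; simp only [mem_Icc] at hm
    have h1 : m * p ≤ n^2 := by
      have h2 := mul_le_mul_of_nonneg_right hm.2 hp0.le
      linarith
    have h2 : m * p < n^2 := by
      rcases h1.lt_or_eq with h | h
      · exact h
      · exact absurd ⟨m, by linarith⟩ hn2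
    exact jfi_floor_sqrt_count (m*p) n (mul_nonneg (by omega) hp0.le) h2 (by omega)
  have hB : ∀ m ∈ Icc (1:ℤ) M, ⌊(1 + Real.sqrt ((4 * (m-1) * p + 3 * p - 4 : ℤ) : ℝ)) / 2⌋
      = ∑ j ∈ Icc (1:ℤ) (n-1), if j^2 - j ≤ (m-1)*p + 3*n - 2 then (1:ℤ) else 0 := by
    intro m hm; simp only [mem_Icc] at hm
    have he : (4*(m-1)*p + 3*p - 4 : ℤ) = 4*((m-1)*p + 3*n - 2) + 1 := by rw [hp]; ring
    rw [he]
    have h0 : 0 ≤ (m-1)*p + 3*n - 2 := by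
      have h5 : 0 ≤ (m-1)*p := mul_nonneg (by omega) hp0.le
      omega
    have h1 : (m-1)*p + 3*n - 2 < (n-1)^2 + (n-1) := by
      have h2 : (m-1)*p ≤ (M-1)*p := mul_le_mul_of_nonneg_right (by omega) hp0.le
      have h3 : (M-1)*p = M*p - p := by ring
      have h4 : (n-1)^2 + (n-1) = n^2 - n := by ring
      linarith
    exact jfi_floor_q_count _ (n-1) h0 h1 (by omega)
  have hQsum : ∑ m ∈ Icc (0:ℤ) (M-1), ⌊(1 + Real.sqrt ((4 * m * p + 3 * p - 4 : ℤ) : ℝ)) / 2⌋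
      = ∑ m ∈ Icc (1:ℤ) M, ∑ j ∈ Icc (1:ℤ) (n-1), if j^2 - j ≤ (m-1)*p + 3*n - 2 then (1:ℤ) else 0 := by
    rw [jfi_shift (fun m => ⌊(1 + Real.sqrt ((4 * m * p + 3 * p - 4 : ℤ) : ℝ)) / 2⌋) 0 (M-1),
      show (0:ℤ)+1 = 1 by norm_num, show M-1+1 = M by ring]
    refine Finset.sum_congr rfl fun m hm => ?_
    exact hB m hm
  rw [Finset.sum_congr rfl hA, hQsum, ← Finset.sum_sub_distrib]
  -- Step 2: evaluate the double sum
  have hmain : ∑ m ∈ Icc (1:ℤ) M,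
      ((∑ j ∈ Icc (1:ℤ) (n-1), if j^2 ≤ m*p then (1:ℤ) else 0)
        - ∑ j ∈ Icc (1:ℤ) (n-1), if j^2 - j ≤ (m-1)*p + 3*n - 2 then (1:ℤ) else 0)
      = ∑ j ∈ Icc (1:ℤ) (n-1), ((j^2 - j + n)/p - j^2/p) := by
    have h1 : ∀ m ∈ Icc (1:ℤ) M,
        ((∑ j ∈ Icc (1:ℤ) (n-1), if j^2 ≤ m*p then (1:ℤ) else 0)
          - ∑ j ∈ Icc (1:ℤ) (n-1), if j^2 - j ≤ (m-1)*p + 3*n - 2 then (1:ℤ) else 0)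
        = ∑ j ∈ Icc (1:ℤ) (n-1), (if j^2 ≤ m*p ∧ m*p ≤ j^2 - j + n then (1:ℤ) else 0) := by
      intro m hm; simp only [mem_Icc] at hm
      rw [← Finset.sum_sub_distrib]
      refine Finset.sum_congr rfl fun j hj => ?_
      simp only [mem_Icc] at hj
      rw [show (m-1)*p + 3*n - 2 = m*p - n - 1 by rw [hp]; ring]
      obtain ⟨t, ht⟩ : ∃ t, m*p = t := ⟨_, rfl⟩
      obtain ⟨u, hu⟩ : ∃ u, j^2 = u := ⟨_, rfl⟩
      rw [ht, hu]
      split_ifs <;> omega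
    rw [Finset.sum_congr rfl h1, Finset.sum_comm]
    refine Finset.sum_congr rfl fun j hj => ?_
    simp only [mem_Icc] at hj
    have hj2 : 1 ≤ j^2 := by nlinarith
    have hiff : ∀ m ∈ Icc (1:ℤ) M, (if j^2 ≤ m*p ∧ m*p ≤ j^2 - j + n then (1:ℤ) else 0)
        = (if (j^2-1)/p + 1 ≤ m ∧ m ≤ (j^2-j+n)/p then (1:ℤ) else 0) := by
      intro m _
      have hi1 : m ≤ (j^2-j+n)/p ↔ m*p ≤ j^2-j+n := Int.le_ediv_iff_mul_le hp0
      have hi2 : (j^2-1)/p < m ↔ j^2-1 < m*p := Int.ediv_lt_iff_lt_mul hp0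
      have hiffmain : (j^2 ≤ m*p ∧ m*p ≤ j^2 - j + n) ↔ ((j^2-1)/p + 1 ≤ m ∧ m ≤ (j^2-j+n)/p) := by
        constructor
        · rintro ⟨ha, hb⟩
          refine ⟨?_, hi1.mpr hb⟩
          have := hi2.mpr (by linarith)
          omega
        · rintro ⟨ha, hb⟩
          refine ⟨?_, hi1.mp hb⟩
          have := hi2.mp (by omega)
          linarith
      simp only [hiffmain]
    have hb1 : (1:ℤ) ≤ (j^2-1)/p + 1 := by
      have h5 : 0 ≤ (j^2-1)/p := Int.ediv_nonneg (by omega) hp0.le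
      omega
    have hb2 : (j^2-j+n)/p ≤ M := by
      rw [hM]
      apply Int.ediv_le_ediv hp0
      nlinarith [mul_nonneg (show (0:ℤ) ≤ n-1-j by omega) (show (0:ℤ) ≤ n+j-2 by omega)]
    have hb3 : ((j^2-1)/p + 1) - 1 ≤ (j^2-j+n)/p := by
      have h5 := Int.ediv_le_ediv hp0 (show j^2-1 ≤ j^2-j+n by omega)
      omega
    rw [Finset.sum_congr rfl hiff, jfi_sum_ind_Icc hb1 hb2 hb3]
    have h9 := jfi_ediv_sub_one hp0 (hndvd j (by omega) (by omega))
    omega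
  rw [hmain]
  -- Step 3: the RHS cardinality
  have hsetrw : {k : ℤ | 2 ≤ k ∧ k ≤ n + 2 ∧ p ≤ (k - 1) ^ 2 % p + (k + 1 - 3 * n) % p}
      = (((Icc (2:ℤ) (n+2)).filter (fun k => p ≤ (k - 1) ^ 2 % p + (k + 1 - 3 * n) % p) : Finset ℤ) : Set ℤ) := by
    ext k
    simp only [Set.mem_setOf_eq, Finset.coe_filter, mem_Icc, Set.mem_setOf_eq]
    tauto
  rw [hsetrw, Set.ncard_coe_finset, ← Finset.sum_boole]
  have hkterm : ∀ k ∈ Icc (2:ℤ) (n+2), (if p ≤ (k - 1) ^ 2 % p + (k + 1 - 3 * n) % p then (1:ℤ) else 0)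
      = ((k-1)^2 - (3*n-1-k))/p - (k-1)^2/p + 1 := by
    intro k hk; simp only [mem_Icc] at hk
    have he : (k+1-3*n) % p = k + n := by
      rw [show k+1-3*n = (k+n) + (-1)*p by rw [hp]; ring, Int.add_mul_emod_self_right]
      exact Int.emod_eq_of_lt (by omega) (by omega)
    rw [he]
    have hind := jfi_indicator_emod ((k-1)^2) (3*n-1-k) p hp0 (by omega) (by omega)
    obtain ⟨rr, hrr⟩ : ∃ rr, (k-1)^2 % p = rr := ⟨_, rfl⟩
    rw [hrr] at hind
    rw [hrr, ← hind]
    have hiff2 : (p ≤ rr + (k+n)) ↔ (3*n-1-k ≤ rr) := by omega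
    simp only [hiff2]
  rw [Finset.sum_congr rfl hkterm]
  have hresum : ∑ k ∈ Icc (2:ℤ) (n+2), (((k-1)^2 - (3*n-1-k))/p - (k-1)^2/p + 1)
      = ∑ j ∈ Icc (1:ℤ) (n+1), ((j^2+j+n)/p - j^2/p) := by
    rw [show n+2 = (n+1)+1 by ring, show (2:ℤ) = 1+1 by norm_num,
      jfi_shift' (fun k => (((k-1)^2 - (3*n-1-k))/p - (k-1)^2/p + 1)) 1 (n+1)]
    refine Finset.sum_congr rfl fun j hj => ?_
    simp only [mem_Icc] at hj
    show ((j+1-1)^2 - (3*n-1-(j+1)))/p - (j+1-1)^2/p + 1 = (j^2+j+n)/p - j^2/p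
    rw [show ((j+1-1:ℤ))^2 - (3*n-1-(j+1)) = (j^2+j+n+1) - p by rw [hp]; ring,
      show ((j+1-1:ℤ))^2 = j^2 by ring]
    have e3 : ((j^2+j+n+1) - p)/p = (j^2+j+n+1)/p - 1 := by
      have h5 := Int.add_mul_ediv_right ((j^2+j+n+1) - p) 1 hpne
      rw [show (j^2+j+n+1) - p + 1*p = j^2+j+n+1 by ring] at h5
      omega
    have e4 : (j^2+j+n+1 - 1)/p = (j^2+j+n+1)/p :=
      jfi_ediv_sub_one hp0 (jfi_not_dvd_sq_add n p hn hp hprime j)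
    rw [e3, show (j^2+j+n : ℤ) = j^2+j+n+1-1 by ring, e4]
    ring
  rw [hresum]
  -- Step 4: the final integer identity
  have hstep1 : ∀ j ∈ Icc (1:ℤ) (n+1), ((j^2+j+n)/p - j^2/p)
      = (((j+1)^2-(j+1)+n)/p - (j^2-j+n)/p) + ((j^2-j+n)/p - j^2/p) := by
    intro j _
    rw [show ((j+1:ℤ))^2-(j+1)+n = j^2+j+n by ring]
    ring
  rw [Finset.sum_congr rfl hstep1, Finset.sum_add_distrib]
  have htel := jfi_tele (fun j => (j^2-j+n)/p) 1 (n+1) (by omega)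
  beta_reduce at htel
  rw [htel]
  have hs1 := jfi_sum_split_top (fun j => (j^2-j+n)/p - j^2/p) 1 n (by omega)
  beta_reduce at hs1
  rw [hs1]
  have hs2 := jfi_sum_split_top (fun j => (j^2-j+n)/p - j^2/p) 1 (n-1) (by omega)
  beta_reduce at hs2
  rw [show (n-1)+1 = n by ring] at hs2
  rw [hs2]
  have hZ : ((n+1+1)^2-(n+1+1)+n)/p = M + 1 := by
    apply jfi_ediv_eq hp0 (show ((n+1+1:ℤ))^2-(n+1+1)+n = (M+1)*p + (r+3) by linear_combination -hMr - hp)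
      (by omega) (by omega)
  have hv1 : ((1:ℤ)^2-1+n)/p = 0 := by
    rw [show ((1:ℤ)^2-1+n) = n by ring]
    exact jfi_div_eq_zero (by omega) (by omega)
  have hv2 : (n^2-n+n)/p = n^2/p := by rw [show n^2-n+n = n^2 by ring]
  have hXeqY : ((n+1)^2-(n+1)+n)/p = (n+1)^2/p := by
    rcases le_or_gt r (2*n-3) with hc | hc
    · rw [jfi_ediv_eq hp0 (show ((n+1:ℤ))^2-(n+1)+n = M*p + (r+2*n) by linear_combination -hMr)
        (by omega) (by omega),
        jfi_ediv_eq hp0 (show ((n+1:ℤ))^2 = M*p + (r+2*n+1) by linear_combination -hMr)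
        (by omega) (by omega)]
    · have hc2 : 2*n - 1 ≤ r := by omega
      rw [jfi_ediv_eq hp0 (show ((n+1:ℤ))^2-(n+1)+n = (M+1)*p + (r-2*n+1) by linear_combination -hMr - hp)
        (by omega) (by omega),
        jfi_ediv_eq hp0 (show ((n+1:ℤ))^2 = (M+1)*p + (r-2*n+2) by linear_combination -hMr - hp)
        (by omega) (by omega)]
  linarith [hZ, hv1, hv2, hXeqY]
end
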